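/- For every subset Z ⊆ X_1 and every f ∈ C(X_1,ℝ), the average a-weighted topological pressure satisfies P_W^a(T_1,Z,f) = sup_{{U_i}} P_W^a(T_1,Z,{U_i},f) = lim_{max_{1≤i≤k} diam U_i → 0} P_W^a(T_1,Z,{U_i},f), where the supremum and limit are taken over all tuples of open covers U_i of X_i, i=1,…,k; moreover all these quantities equal the a-weighted topological pressure P^a(T_1,Z,f). -/

import Mathlib

open MeasureTheory Set Filter Topology
open scoped ENNReal symmDiff

namespace WTP

variable {k : ℕ}

/-- cumulative weight `a 1 + … + a i` (zero-indexed: `a 0 + … + a i`). -/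
noncomputable def cw (a : Fin k → ℝ) (i : Fin k) : ℝ := ∑ j ∈ Finset.Iic i, a j

/-- Birkhoff sum `S_n f = ∑_{l<n} f ∘ T^l`. -/
noncomputable def birk {X : Type*} (T : X → X) (f : X → ℝ) (n : ℕ) (x : X) : ℝ :=
  ∑ l ∈ Finset.range n, f (T^[l] x)

/-- a (finite) open cover of a topological space. -/
def IsOpenCover {X : Type*} [TopologicalSpace X] (𝒰 : Set (Set X)) : Prop :=
  𝒰.Finite ∧ (∀ U ∈ 𝒰, IsOpen U) ∧ ⋃₀ 𝒰 = Set.univ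

/-- pullback of a cover along a map. -/
def pullCov {X Y : Type*} (g : X → Y) (𝒰 : Set (Set Y)) : Set (Set X) :=
  (fun U => g ⁻¹' U) '' 𝒰

/-- the quantity `exp(−s·n + (1/a₁)·sup_{x∈A} S_{⌈a₁ n⌉} f(x))`, as an element of `ℝ≥0∞`. -/
noncomputable def pterm {X : Type*} (T1 : X → X) (f : X → ℝ) (a1 s : ℝ) (n : ℕ)
    (A : Set X) : ℝ≥0∞ :=
  ENNReal.ofReal (Real.exp (-(s * n) + (1 / a1) * sSup (birk T1 f ⌈a1 * (n : ℝ)⌉₊ '' A)))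

/-- the weighted Bowen ball `B_n^𝐚(x, ε)`. -/
def wBowen {X : Fin k → Type*} [∀ i, MetricSpace (X i)] {X1 : Type*}
    (T : ∀ i, X i → X i) (τ : ∀ i, X1 → X i) (a : Fin k → ℝ)
    (n : ℕ) (x : X1) (ε : ℝ) : Set X1 :=
  {y | ∀ i : Fin k, ∀ j < ⌈cw a i * (n : ℝ)⌉₊,
      dist ((T i)^[j] (τ i x)) ((T i)^[j] (τ i y)) < ε}

section Bowen

variable [NeZero k] {X : Fin k → Type*} [∀ i, MetricSpace (X i)] {X1 : Type*}
  [MeasurableSpace X1]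

/-- `Λ^{𝐚,s}_{N,ε}(Z,f)`. -/
noncomputable def lamBowenN (T1 : X1 → X1) (T : ∀ i, X i → X i) (τ : ∀ i, X1 → X i)
    (a : Fin k → ℝ) (f : X1 → ℝ) (s ε : ℝ) (N : ℕ) (Z : Set X1) : ℝ≥0∞ :=
  ⨅ (D : Set (ℕ × Set X1)) (_ : D.Countable)
    (_ : ∀ p ∈ D, N ≤ p.1 ∧ MeasurableSet p.2 ∧ ∃ x : X1, p.2 ⊆ wBowen T τ a p.1 x ε)
    (_ : Z ⊆ ⋃ p ∈ D, p.2),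
    ∑' p : D, pterm T1 f (a 0) s p.1.1 p.1.2

/-- `Λ^{𝐚,s}_{ε}(Z,f) = lim_{N→∞} Λ^{𝐚,s}_{N,ε}(Z,f)` (an increasing limit). -/
noncomputable def lamBowen (T1 : X1 → X1) (T : ∀ i, X i → X i) (τ : ∀ i, X1 → X i)
    (a : Fin k → ℝ) (f : X1 → ℝ) (s ε : ℝ) (Z : Set X1) : ℝ≥0∞ :=
  ⨆ N : ℕ, lamBowenN T1 T τ a f s ε N Z

/-- `P^𝐚(T₁, Z, ε, f) = inf {s : Λ^{𝐚,s}_ε(Z,f) = 0}`. -/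
noncomputable def PBowenEps (T1 : X1 → X1) (T : ∀ i, X i → X i) (τ : ∀ i, X1 → X i)
    (a : Fin k → ℝ) (Z : Set X1) (f : X1 → ℝ) (ε : ℝ) : EReal :=
  sInf (Real.toEReal '' {s : ℝ | lamBowen T1 T τ a f s ε Z = 0})

/-- the 𝐚-weighted topological pressure `P^𝐚(T₁, Z, f) = lim_{ε→0} P^𝐚(T₁, Z, ε, f)`
(an increasing limit as `ε` decreases to `0`). -/
noncomputable def PBowen (T1 : X1 → X1) (T : ∀ i, X i → X i) (τ : ∀ i, X1 → X i)
    (a : Fin k → ℝ) (Z : Set X1) (f : X1 → ℝ) : EReal :=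
  ⨆ ε : {e : ℝ // 0 < e}, PBowenEps T1 T τ a Z f ε.1

/-- `W^{𝐚,s}_{N,ε}(Z,f)`. -/
noncomputable def wBowenWN (T1 : X1 → X1) (T : ∀ i, X i → X i) (τ : ∀ i, X1 → X i)
    (a : Fin k → ℝ) (f : X1 → ℝ) (s ε : ℝ) (N : ℕ) (Z : Set X1) : ℝ≥0∞ :=
  ⨅ (D : Set (ℕ × Set X1 × ℝ≥0∞)) (_ : D.Countable)
    (_ : ∀ p ∈ D, N ≤ p.1 ∧ MeasurableSet p.2.1 ∧ 0 < p.2.2 ∧ p.2.2 ≠ ⊤ ∧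
        ∃ x : X1, p.2.1 ⊆ wBowen T τ a p.1 x ε)
    (_ : ∀ z ∈ Z, 1 ≤ ∑' p : D, (p.1.2.1).indicator (fun _ => p.1.2.2) z),
    ∑' p : D, p.1.2.2 * pterm T1 f (a 0) s p.1.1 p.1.2.1

/-- `W^{𝐚,s}_{ε}(Z,f)`. -/
noncomputable def wBowenW (T1 : X1 → X1) (T : ∀ i, X i → X i) (τ : ∀ i, X1 → X i)
    (a : Fin k → ℝ) (f : X1 → ℝ) (s ε : ℝ) (Z : Set X1) : ℝ≥0∞ :=
  ⨆ N : ℕ, wBowenWN T1 T τ a f s ε N Z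

/-- `P_W^𝐚(T₁, Z, ε, f)`. -/
noncomputable def PWBowenEps (T1 : X1 → X1) (T : ∀ i, X i → X i) (τ : ∀ i, X1 → X i)
    (a : Fin k → ℝ) (Z : Set X1) (f : X1 → ℝ) (ε : ℝ) : EReal :=
  sInf (Real.toEReal '' {s : ℝ | wBowenW T1 T τ a f s ε Z = 0})

/-- the average 𝐚-weighted topological pressure `P_W^𝐚(T₁, Z, f)`. -/
noncomputable def PWBowen (T1 : X1 → X1) (T : ∀ i, X i → X i) (τ : ∀ i, X1 → X i)
    (a : Fin k → ℝ) (Z : Set X1) (f : X1 → ℝ) : EReal :=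
  ⨆ ε : {e : ℝ // 0 < e}, PWBowenEps T1 T τ a Z f ε.1

end Bowen

section Local

variable [NeZero k] {X1 : Type*} [MeasurableSpace X1]

/-- the cover `⋁_{i=1}^k (τ_{i-1}^{-1} 𝒰_i)_0^{⌈(a_1+…+a_i) n⌉ - 1}` on the first space, where
`𝒱 i` is the pulled back cover `τ_{i-1}^{-1} 𝒰_i`. -/
def jointFiber (T1 : X1 → X1) (a : Fin k → ℝ) (𝒱 : Fin k → Set (Set X1)) (n : ℕ) :
    Set (Set X1) :=
  {A | ∃ V : Fin k → ℕ → Set X1,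
      (∀ i, ∀ l < ⌈cw a i * (n : ℝ)⌉₊, V i l ∈ 𝒱 i) ∧
      A = ⋂ i : Fin k, ⋂ l ∈ Finset.range ⌈cw a i * (n : ℝ)⌉₊, (T1^[l]) ⁻¹' V i l}

/-- `Λ^{𝐚,s}_{N,{𝒰_i}}(Z,f)`. -/
noncomputable def lamLocN (T1 : X1 → X1) (a : Fin k → ℝ) (𝒱 : Fin k → Set (Set X1))
    (f : X1 → ℝ) (s : ℝ) (N : ℕ) (Z : Set X1) : ℝ≥0∞ :=
  ⨅ (D : Set (ℕ × Set X1)) (_ : D.Countable)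
    (_ : ∀ p ∈ D, N ≤ p.1 ∧ MeasurableSet p.2 ∧ ∃ A ∈ jointFiber T1 a 𝒱 p.1, p.2 ⊆ A)
    (_ : Z ⊆ ⋃ p ∈ D, p.2),
    ∑' p : D, pterm T1 f (a 0) s p.1.1 p.1.2

/-- `Λ^{𝐚,s}_{{𝒰_i}}(Z,f)`. -/
noncomputable def lamLoc (T1 : X1 → X1) (a : Fin k → ℝ) (𝒱 : Fin k → Set (Set X1))
    (f : X1 → ℝ) (s : ℝ) (Z : Set X1) : ℝ≥0∞ :=
  ⨆ N : ℕ, lamLocN T1 a 𝒱 f s N Z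

/-- the local 𝐚-weighted topological pressure `P^𝐚(T₁, Z, {𝒰_i}, f)`, expressed through the
pulled-back covers `𝒱 i = τ_{i-1}^{-1} 𝒰_i`. -/
noncomputable def PLoc (T1 : X1 → X1) (a : Fin k → ℝ) (𝒱 : Fin k → Set (Set X1))
    (Z : Set X1) (f : X1 → ℝ) : EReal :=
  sInf (Real.toEReal '' {s : ℝ | lamLoc T1 a 𝒱 f s Z = 0})

/-- `W^{𝐚,s}_{N,{𝒰_i}}(Z,f)`. -/
noncomputable def wLocN (T1 : X1 → X1) (a : Fin k → ℝ) (𝒱 : Fin k → Set (Set X1))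
    (f : X1 → ℝ) (s : ℝ) (N : ℕ) (Z : Set X1) : ℝ≥0∞ :=
  ⨅ (D : Set (ℕ × Set X1 × ℝ≥0∞)) (_ : D.Countable)
    (_ : ∀ p ∈ D, N ≤ p.1 ∧ MeasurableSet p.2.1 ∧ 0 < p.2.2 ∧ p.2.2 ≠ ⊤ ∧
        ∃ A ∈ jointFiber T1 a 𝒱 p.1, p.2.1 ⊆ A)
    (_ : ∀ z ∈ Z, 1 ≤ ∑' p : D, (p.1.2.1).indicator (fun _ => p.1.2.2) z),
    ∑' p : D, p.1.2.2 * pterm T1 f (a 0) s p.1.1 p.1.2.1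

/-- `W^{𝐚,s}_{{𝒰_i}}(Z,f)`. -/
noncomputable def wLoc (T1 : X1 → X1) (a : Fin k → ℝ) (𝒱 : Fin k → Set (Set X1))
    (f : X1 → ℝ) (s : ℝ) (Z : Set X1) : ℝ≥0∞ :=
  ⨆ N : ℕ, wLocN T1 a 𝒱 f s N Z

/-- the local average 𝐚-weighted topological pressure `P_W^𝐚(T₁, Z, {𝒰_i}, f)`. -/
noncomputable def PWLoc (T1 : X1 → X1) (a : Fin k → ℝ) (𝒱 : Fin k → Set (Set X1))
    (Z : Set X1) (f : X1 → ℝ) : EReal :=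
  sInf (Real.toEReal '' {s : ℝ | wLoc T1 a 𝒱 f s Z = 0})

end Local

/-- iterated join `(𝒰)_0^{n-1} = ⋁_{l=0}^{n-1} T^{-l} 𝒰` of a cover. -/
def covJoinT {X : Type*} (T : X → X) (𝒰 : Set (Set X)) (n : ℕ) : Set (Set X) :=
  {A | ∃ u : ℕ → Set X, (∀ l < n, u l ∈ 𝒰) ∧
      A = ⋂ l ∈ Finset.range n, (T^[l]) ⁻¹' u l}

/-- the join `⋁_{j=i}^{k} 𝒱 j` of covers of a single space (in applications
`𝒱 j = τ_{j-1}^{-1} 𝒰_j`). -/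
def joinFrom {X1 : Type*} (𝒱 : Fin k → Set (Set X1)) (i : Fin k) : Set (Set X1) :=
  {A | ∃ V : Fin k → Set X1, (∀ j, i ≤ j → V j ∈ 𝒱 j) ∧ A = ⋂ j ∈ Finset.Ici i, V j}

/-- a finite measurable partition (indexed). -/
def IsPart {X : Type*} [MeasurableSpace X] {ι : Type*} (β : ι → Set X) : Prop :=
  (∀ i, MeasurableSet (β i)) ∧ (∀ i j, i ≠ j → Disjoint (β i) (β j)) ∧ ⋃ i, β i = Set.univ

/-- the static entropy `H_μ(β) = -∑ μ(B) log μ(B)` of a finite (indexed) partition. -/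
noncomputable def entH {X : Type*} [MeasurableSpace X] {ι : Type*} [Fintype ι]
    (μ : Measure X) (β : ι → Set X) : ℝ :=
  ∑ i, Real.negMulLog (μ (β i)).toReal

/-- the dynamical join `⋁_{l=0}^{n-1} T^{-l} β` of a partition. -/
def dynJoin {X : Type*} (T : X → X) {ι : Type*} (β : ι → Set X) (n : ℕ) :
    (Fin n → ι) → Set X :=
  fun c => ⋂ l : Fin n, (T^[(l : ℕ)]) ⁻¹' β (c l)

/-- the measure-theoretic entropy `h_μ(T, β) = lim_n (1/n) H_μ(⋁_{l<n} T^{-l}β)` of `T`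
relative to a finite partition. -/
noncomputable def hPart {X : Type*} [MeasurableSpace X] {ι : Type*} [Fintype ι]
    (μ : Measure X) (T : X → X) (β : ι → Set X) : EReal :=
  Filter.liminf (fun n : ℕ => ((entH μ (dynJoin T β n) / n : ℝ) : EReal)) Filter.atTop

/-- the Kolmogorov–Sinai entropy `h_μ(T)`. -/
noncomputable def hKS {X : Type*} [MeasurableSpace X] (μ : Measure X) (T : X → X) : EReal :=
  ⨆ p : (Σ m : ℕ, {β : Fin m → Set X // IsPart β}), hPart μ T p.2.1

/-- `H_μ(𝒰) = inf {H_μ(β) : β a finite measurable partition refining 𝒰}`. -/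
noncomputable def covH {X : Type*} [MeasurableSpace X] (μ : Measure X)
    (𝒰 : Set (Set X)) : ℝ :=
  sInf {h : ℝ | ∃ (m : ℕ) (β : Fin m → Set X), IsPart β ∧
      (∀ i, ∃ U ∈ 𝒰, β i ⊆ U) ∧ h = entH μ β}

/-- the local measure-theoretic entropy `h_μ(T, 𝒰) = lim_n (1/n) H_μ((𝒰)_0^{n-1})` of `T`
relative to an open cover. -/
noncomputable def hCov {X : Type*} [MeasurableSpace X] (μ : Measure X) (T : X → X)
    (𝒰 : Set (Set X)) : EReal :=
  Filter.liminf (fun n : ℕ => ((covH μ (covJoinT T 𝒰 n) / n : ℝ) : EReal)) Filter.atTop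

/-- `h⁺_μ(T,𝒰) = inf {h_μ(T,β) : β a finite measurable partition refining 𝒰}`. -/
noncomputable def hCovPlus {X : Type*} [MeasurableSpace X] (μ : Measure X) (T : X → X)
    (𝒰 : Set (Set X)) : EReal :=
  ⨅ p : (Σ m : ℕ, {β : Fin m → Set X // IsPart β ∧ ∀ i, ∃ U ∈ 𝒰, β i ⊆ U}),
    hPart μ T p.2.1

/-- the join `⋁_{j=i}^{k} γ j` of partitions of a single space (in applications
`γ j = τ_{j-1}^{-1} α_j`). -/
def partJoinFrom {X1 : Type*} {ι : Fin k → Type*} (γ : ∀ j, ι j → Set X1) (i : Fin k) :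
    (∀ j : {j : Fin k // i ≤ j}, ι j) → Set X1 :=
  fun c => ⋂ j : {j : Fin k // i ≤ j}, γ j (c j)

/-- the partition `⋁_{i=1}^k (γ_i)_0^{⌈(a_1+…+a_i)N⌉-1}` on the first space, where
`γ i = τ_{i-1}^{-1} α_i`. -/
def bigPartJoin {X1 : Type*} (T1 : X1 → X1) (a : Fin k → ℝ) {ι : Fin k → Type*}
    (γ : ∀ i, ι i → Set X1) (N : ℕ) :
    (∀ i : Fin k, Fin ⌈cw a i * (N : ℝ)⌉₊ → ι i) → Set X1 :=
  fun c => ⋂ i : Fin k, ⋂ l : Fin ⌈cw a i * (N : ℝ)⌉₊, (T1^[(l : ℕ)]) ⁻¹' γ i (c i l)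

/-- conditional entropy `H_μ(γ|β) = H_μ(γ ∨ β) - H_μ(β)`. -/
noncomputable def condEnt {X : Type*} [MeasurableSpace X] {ι κ : Type*} [Fintype ι] [Fintype κ]
    (μ : Measure X) (γ : ι → Set X) (β : κ → Set X) : ℝ :=
  entH μ (fun p : ι × κ => γ p.1 ∩ β p.2) - entH μ β

/-- the oscillation `w_f(⋁_{i=1}^k τ_{i-1}^{-1} 𝒰_i)` of `f` on the joined cover, where
`𝒱 i = τ_{i-1}^{-1} 𝒰_i`. -/
noncomputable def wfJoin {X1 : Type*} (f : X1 → ℝ) (𝒱 : Fin k → Set (Set X1)) : ℝ :=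
  sSup {d : ℝ | ∃ V : Fin k → Set X1, (∀ i, V i ∈ 𝒱 i) ∧
      ∃ x ∈ ⋂ i, V i, ∃ y ∈ ⋂ i, V i, d = |f x - f y|}

/-- the topological support of a measure. -/
def msupp {X : Type*} [TopologicalSpace X] [MeasurableSpace X] (μ : Measure X) : Set X :=
  {x | ∀ U : Set X, IsOpen U → x ∈ U → 0 < μ U}

section Chunk1
open Metric ENNReal

variable {k : ℕ} [NeZero k] {X : Fin k → Type} [∀ i, MetricSpace (X i)]
  (T : ∀ i, X i → X i) (τ : ∀ i, X 0 → X i) (a : Fin k → ℝ)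

lemma cw_zero : cw a 0 = a 0 := by
  unfold cw
  rw [show Finset.Iic (0 : Fin k) = {0} by ext j; simp [Fin.le_zero_iff]]
  simp

lemma iterate_comm (hτe : ∀ i, τ i ∘ T 0 = T i ∘ τ i) (i : Fin k) (l : ℕ) (x : X 0) :
    (T i)^[l] (τ i x) = τ i ((T 0)^[l] x) := by
  induction l generalizing x with
  | zero => rfl
  | succ l ih =>
      rw [Function.iterate_succ_apply, Function.iterate_succ_apply,
        show T i (τ i x) = τ i (T 0 x) from (congrFun (hτe i) x).symm, ih]

lemma wBowen_mono {ε ε' : ℝ} (h : ε ≤ ε') (n : ℕ) (x : X 0) :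
    wBowen T τ a n x ε ⊆ wBowen T τ a n x ε' :=
  fun y hy i j hj => lt_of_lt_of_le (hy i j hj) h

lemma wBowen_open (hT : ∀ i, Continuous (T i)) (hτc : ∀ i, Continuous (τ i))
    (n : ℕ) (x : X 0) (ε : ℝ) : IsOpen (wBowen T τ a n x ε) := by
  have he : wBowen T τ a n x ε =
      ⋂ (p : Σ i : Fin k, Fin ⌈cw a i * (n : ℝ)⌉₊),
        (fun y => (T p.1)^[(p.2 : ℕ)] (τ p.1 y)) ⁻¹'
          Metric.ball ((T p.1)^[(p.2 : ℕ)] (τ p.1 x)) ε := by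
    ext y
    simp only [wBowen, Set.mem_setOf_eq, Set.mem_iInter, Set.mem_preimage, Metric.mem_ball]
    constructor
    · intro h p; rw [dist_comm]; exact h p.1 p.2.1 p.2.2
    · intro h i j hj; rw [dist_comm]; exact h ⟨i, ⟨j, hj⟩⟩
  rw [he]
  exact isOpen_iInter_of_finite fun p =>
    Metric.isOpen_ball.preimage (((hT p.1).iterate _).comp (hτc p.1))

lemma wBowen_coord0 (hτ0 : τ 0 = id) {n : ℕ} {x y : X 0} {ε : ℝ}
    (hy : y ∈ wBowen T τ a n x ε) :
    ∀ l < ⌈a 0 * (n : ℝ)⌉₊, dist ((T 0)^[l] x) ((T 0)^[l] y) < ε := by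
  intro l hl
  have := hy 0 l (by rw [cw_zero]; exact hl)
  simpa [hτ0] using this

lemma exists_greedy {α : Type*} (Z' : Set α) (big : α → Set α)
    (hself : ∀ z ∈ Z', z ∈ big z) :
    ∃ S : Set α, S ⊆ Z' ∧ (∀ z ∈ Z', ∃ u ∈ S, z ∈ big u) ∧
      ∀ u ∈ S, ∀ v ∈ S, u ≠ v → (u ∉ big v ∨ v ∉ big u) := by
  classical
  have iwo : IsWellOrder α WellOrderingRel := WellOrderingRel.isWellOrder
  have wf : WellFounded (WellOrderingRel (α := α)) := iwo.toIsWellFounded.wf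
  let F : (z : α) → ((z' : α) → WellOrderingRel z' z → Prop) → Prop :=
    fun z ih => z ∈ Z' ∧ ∀ z' (hz' : WellOrderingRel z' z), ih z' hz' → z ∉ big z'
  let sel : α → Prop := wf.fix F
  have hsel : ∀ z, sel z ↔
      (z ∈ Z' ∧ ∀ z', WellOrderingRel z' z → sel z' → z ∉ big z') := by
    intro z
    have := wf.fix_eq F z
    exact Iff.of_eq this
  refine ⟨{z | sel z}, fun z hz => ((hsel z).1 hz).1, ?_, ?_⟩
  · intro z hz
    by_cases hzs : sel z
    · exact ⟨z, hzs, hself z hz⟩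
    · rw [hsel] at hzs
      push_neg at hzs
      obtain ⟨u, _, hu, hb⟩ := hzs hz
      exact ⟨u, hu, hb⟩
  · intro u hu v hv hne
    rcases trichotomous_of WellOrderingRel u v with h | h | h
    · exact Or.inr (((hsel v).1 hv).2 u h hu)
    · exact absurd h hne
    · exact Or.inl (((hsel u).1 hu).2 v h hv)

end Chunk1
section Chunk2
open ENNReal

/-- critical value of a one-parameter family. -/
noncomputable def crit (g : ℝ → ℝ≥0∞) : EReal := sInf (Real.toEReal '' {s : ℝ | g s = 0})

lemma crit_mono {g₁ g₂ : ℝ → ℝ≥0∞} (h : ∀ s, g₂ s = 0 → g₁ s = 0) :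
    crit g₁ ≤ crit g₂ :=
  sInf_le_sInf (Set.image_mono fun s hs => h s hs)

lemma crit_le_shift {g₁ g₂ : ℝ → ℝ≥0∞} {δ : ℝ} (hδ : 0 ≤ δ)
    (h : ∀ s, g₂ s = 0 → g₁ (s + δ) = 0) :
    crit g₁ ≤ crit g₂ + (δ : EReal) := by
  rcases Set.eq_empty_or_nonempty {s : ℝ | g₂ s = 0} with h2 | h2
  · simp [crit, h2, Set.image_empty, sInf_empty]
  · have hsub : crit g₁ - (δ : EReal) ≤ crit g₂ := by
      apply le_sInf
      rintro b ⟨s, hs, rfl⟩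
      rw [EReal.sub_le_iff_le_add (Or.inl (EReal.coe_ne_bot δ)) (Or.inl (EReal.coe_ne_top δ))]
      have : ((s + δ : ℝ) : EReal) ∈ Real.toEReal '' {s : ℝ | g₁ s = 0} :=
        ⟨s + δ, h s hs, rfl⟩
      calc crit g₁ ≤ ((s + δ : ℝ) : EReal) := sInf_le this
      _ = (s : EReal) + (δ : EReal) := by rw [EReal.coe_add]
    rwa [EReal.sub_le_iff_le_add (Or.inl (EReal.coe_ne_bot δ))
      (Or.inl (EReal.coe_ne_top δ))] at hsub

lemma ereal_le_of_forall_add {x y : EReal} (h : ∀ η : ℝ, 0 < η → x ≤ y + (η : EReal)) :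
    x ≤ y := by
  induction y with
  | bot =>
      have := h 1 zero_lt_one
      simpa using this
  | coe yr =>
      by_contra hlt
      push_neg at hlt
      obtain ⟨r, hr1, hr2⟩ := EReal.exists_between_coe_real hlt
      have hη : (0 : ℝ) < r - yr := by
        have : (yr : EReal) < (r : EReal) := hr1
        rw [EReal.coe_lt_coe_iff] at this
        linarith
      have := h (r - yr) hη
      rw [show (yr : EReal) + ((r - yr : ℝ) : EReal) = (r : EReal) by
        rw [← EReal.coe_add]; norm_num] at this
      exact absurd hr2 (not_lt.2 this)
  | top => exact le_top

end Chunk2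
section Chunk3
open Metric

/-- oscillation of `f` at scale `ε`. -/
noncomputable def osc {Y : Type*} [MetricSpace Y] (f : Y → ℝ) (ε : ℝ) : ℝ :=
  sSup {d : ℝ | ∃ x y, dist x y ≤ ε ∧ d = |f x - f y|}

variable {Y : Type*} [MetricSpace Y] {f : Y → ℝ}

lemma exists_bound [CompactSpace Y] (hf : Continuous f) :
    ∃ M : ℝ, 0 ≤ M ∧ ∀ x, |f x| ≤ M := by
  rcases isEmpty_or_nonempty Y with hY | hY
  · exact ⟨0, le_refl 0, fun x => (IsEmpty.false x).elim⟩
  · obtain ⟨x0, -, hx0⟩ := isCompact_univ.exists_isMaxOn ⟨Classical.arbitrary Y, trivial⟩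
        (continuous_abs.comp hf).continuousOn
    exact ⟨|f x0|, abs_nonneg _, fun x => hx0 (Set.mem_univ x)⟩

lemma osc_nonneg (ε : ℝ) : 0 ≤ osc f ε :=
  Real.sSup_nonneg (by rintro d ⟨x, y, -, rfl⟩; exact abs_nonneg _)

lemma osc_le [CompactSpace Y] (hf : Continuous f) {x y : Y} {ε : ℝ} (h : dist x y ≤ ε) :
    |f x - f y| ≤ osc f ε := by
  obtain ⟨M, hM0, hM⟩ := exists_bound hf
  apply le_csSup
  · refine ⟨2 * M, ?_⟩
    rintro d ⟨u, v, -, rfl⟩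
    calc |f u - f v| ≤ |f u| + |f v| := abs_sub _ _
    _ ≤ 2 * M := by have := hM u; have := hM v; linarith
  · exact ⟨x, y, h, rfl⟩

lemma osc_small [CompactSpace Y] (hf : Continuous f) {η : ℝ} (hη : 0 < η) :
    ∃ ε : ℝ, 0 < ε ∧ osc f ε ≤ η := by
  have huc := CompactSpace.uniformContinuous_of_continuous hf
  rw [Metric.uniformContinuous_iff] at huc
  obtain ⟨δ, hδ, hd⟩ := huc η hη
  refine ⟨δ / 2, by linarith, ?_⟩
  apply Real.sSup_le _ hη.le
  rintro d ⟨x, y, hxy, rfl⟩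
  have : dist x y < δ := lt_of_le_of_lt hxy (by linarith)
  have := hd this
  rw [Real.dist_eq] at this
  exact this.le

lemma birk_osc [CompactSpace Y] (hf : Continuous f) (T0 : Y → Y) {n' : ℕ} {x y : Y} {ε : ℝ}
    (h : ∀ l < n', dist (T0^[l] x) (T0^[l] y) ≤ ε) :
    |birk T0 f n' x - birk T0 f n' y| ≤ (n' : ℝ) * osc f ε := by
  unfold birk
  rw [← Finset.sum_sub_distrib]
  calc |∑ l ∈ Finset.range n', (f (T0^[l] x) - f (T0^[l] y))|
      ≤ ∑ l ∈ Finset.range n', |f (T0^[l] x) - f (T0^[l] y)| :=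
        Finset.abs_sum_le_sum_abs _ _
    _ ≤ ∑ _l ∈ Finset.range n', osc f ε := by
        apply Finset.sum_le_sum
        intro l hl
        exact osc_le hf (h l (Finset.mem_range.1 hl))
    _ = (n' : ℝ) * osc f ε := by simp [Finset.sum_const, mul_comm]

end Chunk3
section Chunk4
open Metric ENNReal

variable {k : ℕ} [NeZero k] {X : Fin k → Type} [∀ i, MetricSpace (X i)]
  [MeasurableSpace (X 0)]
  {T : ∀ i, X i → X i} {τ : ∀ i, X 0 → X i} {a : Fin k → ℝ}

lemma jointFiber_subset_wBowen [∀ i, CompactSpace (X i)]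
    (hτe : ∀ i, τ i ∘ T 0 = T i ∘ τ i) {𝒰 : ∀ i, Set (Set (X i))} {ε : ℝ}
    (hdiam : ∀ i, ∀ U ∈ 𝒰 i, Metric.diam U < ε) {n : ℕ} {A : Set (X 0)}
    (hA : A ∈ jointFiber (T 0) a (fun i => pullCov (τ i) (𝒰 i)) n) {x : X 0} (hx : x ∈ A) :
    A ⊆ wBowen T τ a n x ε := by
  obtain ⟨V, hV, rfl⟩ := hA
  intro y hy i j hj
  simp only [Set.mem_iInter, Set.mem_preimage, Finset.mem_range] at hx hy
  obtain ⟨U, hU, hVU⟩ := hV i j hj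
  have hxU : τ i ((T 0)^[j] x) ∈ U := by
    have := hx i j hj; rw [← hVU] at this; exact this
  have hyU : τ i ((T 0)^[j] y) ∈ U := by
    have := hy i j hj; rw [← hVU] at this; exact this
  rw [iterate_comm T τ hτe, iterate_comm T τ hτe]
  calc dist (τ i ((T 0)^[j] x)) (τ i ((T 0)^[j] y)) ≤ Metric.diam U :=
        dist_le_diam_of_mem (Bornology.IsBounded.subset (isBounded_of_compactSpace) (Set.subset_univ U)) hxU hyU
    _ < ε := hdiam i U hU

lemma exists_jointFiber_of_leb (hτe : ∀ i, τ i ∘ T 0 = T i ∘ τ i)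
    {𝒰 : ∀ i, Set (Set (X i))} {δ : ℝ}
    (hleb : ∀ i, ∀ y : X i, ∃ U ∈ 𝒰 i, Metric.ball y δ ⊆ U) (n : ℕ) (x : X 0) :
    ∃ A ∈ jointFiber (T 0) a (fun i => pullCov (τ i) (𝒰 i)) n,
      wBowen T τ a n x δ ⊆ A := by
  classical
  have h := fun (i : Fin k) (y : X i) => hleb i y
  choose Ufun hU1 hU2 using h
  refine ⟨⋂ i : Fin k, ⋂ l ∈ Finset.range ⌈cw a i * (n : ℝ)⌉₊,
      ((T 0)^[l]) ⁻¹' (τ i ⁻¹' (Ufun i ((T i)^[l] (τ i x)))), ?_, ?_⟩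
  · exact ⟨fun i l => τ i ⁻¹' (Ufun i ((T i)^[l] (τ i x))),
      fun i l _ => ⟨Ufun i ((T i)^[l] (τ i x)), hU1 _ _, rfl⟩, rfl⟩
  · intro y hy
    simp only [Set.mem_iInter, Set.mem_preimage, Finset.mem_range]
    intro i l hl
    apply hU2 i ((T i)^[l] (τ i x))
    rw [← iterate_comm T τ hτe]
    rw [Metric.mem_ball, dist_comm]
    exact hy i l hl

lemma exists_leb [∀ i, CompactSpace (X i)] {𝒰 : ∀ i, Set (Set (X i))}
    (h𝒰 : ∀ i, IsOpenCover (𝒰 i)) :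
    ∃ δ : ℝ, 0 < δ ∧ ∀ i, ∀ y : X i, ∃ U ∈ 𝒰 i, Metric.ball y δ ⊆ U := by
  have h : ∀ i : Fin k, ∃ δ : ℝ, 0 < δ ∧ ∀ y : X i, ∃ U ∈ 𝒰 i, Metric.ball y δ ⊆ U := by
    intro i
    have hcov : (Set.univ : Set (X i)) ⊆ ⋃ U : ↥(𝒰 i), (U : Set (X i)) := by
      rw [← Set.sUnion_eq_iUnion, (h𝒰 i).2.2]
    obtain ⟨δ, hδ0, hδ⟩ := lebesgue_number_lemma_of_metric isCompact_univ
      (fun U : ↥(𝒰 i) => (h𝒰 i).2.1 U U.2) hcov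
    exact ⟨δ, hδ0, fun y => by
      obtain ⟨U, hU⟩ := hδ y (Set.mem_univ y); exact ⟨U, U.2, hU⟩⟩
  choose d hd0 hd using h
  refine ⟨(Finset.univ : Finset (Fin k)).inf' ⟨0, Finset.mem_univ 0⟩ d, ?_, ?_⟩
  · exact (Finset.lt_inf'_iff _).2 fun i _ => hd0 i
  · intro i y
    obtain ⟨U, hU, hsub⟩ := hd i y
    exact ⟨U, hU, Set.Subset.trans (Metric.ball_subset_ball
      (Finset.inf'_le d (Finset.mem_univ i))) hsub⟩

lemma exists_small_cover [∀ i, CompactSpace (X i)] {ε : ℝ} (hε : 0 < ε) :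
    ∃ 𝒰 : ∀ i, Set (Set (X i)), (∀ i, IsOpenCover (𝒰 i)) ∧
      ∀ i, ∀ U ∈ 𝒰 i, Metric.diam U < ε := by
  have h : ∀ i : Fin k, ∃ 𝒰i : Set (Set (X i)), IsOpenCover 𝒰i ∧
      ∀ U ∈ 𝒰i, Metric.diam U < ε := by
    intro i
    obtain ⟨t, ht⟩ := isCompact_univ.elim_finite_subcover
      (fun y : X i => Metric.ball y (ε / 4)) (fun y => Metric.isOpen_ball)
      (fun y _ => Set.mem_iUnion.2 ⟨y, Metric.mem_ball_self (by linarith)⟩)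
    refine ⟨(fun y => Metric.ball y (ε / 4)) '' ↑t, ⟨?_, ?_, ?_⟩, ?_⟩
    · exact (t.finite_toSet).image _
    · rintro U ⟨y, -, rfl⟩; exact Metric.isOpen_ball
    · apply Set.eq_univ_of_univ_subset
      intro z hz
      obtain ⟨y, hy⟩ := Set.mem_iUnion.1 (ht hz)
      simp only [Set.mem_iUnion, exists_prop] at hy
      exact ⟨Metric.ball y (ε/4), ⟨y, by simpa using hy.1, rfl⟩, hy.2⟩
    · rintro U ⟨y, -, rfl⟩
      calc Metric.diam (Metric.ball y (ε/4)) ≤ 2 * (ε/4) := Metric.diam_ball (by linarith)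
        _ < ε := by linarith
  choose 𝒰 h1 h2 using h
  exact ⟨𝒰, h1, h2⟩

end Chunk4
section Chunk5
open Metric ENNReal

variable {k : ℕ} [NeZero k] {X : Fin k → Type} [∀ i, MetricSpace (X i)]
  [MeasurableSpace (X 0)]
  {T : ∀ i, X i → X i} {τ : ∀ i, X 0 → X i} {a : Fin k → ℝ}
  {f : X 0 → ℝ} {Z : Set (X 0)}

/-- transfer: local-admissible families are Bowen-admissible when covers have small diam. -/
lemma wBowenWN_le_wLocN [∀ i, CompactSpace (X i)] (hτe : ∀ i, τ i ∘ T 0 = T i ∘ τ i)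
    (hX0 : Nonempty (X 0)) {𝒰 : ∀ i, Set (Set (X i))} {ε : ℝ}
    (hdiam : ∀ i, ∀ U ∈ 𝒰 i, Metric.diam U < ε) (s : ℝ) (N : ℕ) :
    wBowenWN (T 0) T τ a f s ε N Z ≤
      wLocN (T 0) a (fun i => pullCov (τ i) (𝒰 i)) f s N Z := by
  refine le_iInf fun D => le_iInf fun hDc => le_iInf fun hadm => le_iInf fun hcov => ?_
  refine iInf_le_of_le D (iInf_le_of_le hDc (iInf_le_of_le ?_ (iInf_le_of_le hcov le_rfl)))
  intro p hp
  obtain ⟨hN, hM, hc0, hct, A, hAjf, hsub⟩ := hadm p hp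
  refine ⟨hN, hM, hc0, hct, ?_⟩
  rcases Set.eq_empty_or_nonempty p.2.1 with he | ⟨x, hx⟩
  · exact ⟨Classical.arbitrary (X 0), by rw [he]; exact Set.empty_subset _⟩
  · exact ⟨x, Set.Subset.trans hsub
      (jointFiber_subset_wBowen hτe hdiam hAjf (hsub hx))⟩

/-- transfer: Bowen-admissible families at the Lebesgue number scale are local-admissible. -/
lemma wLocN_le_wBowenWN (hτe : ∀ i, τ i ∘ T 0 = T i ∘ τ i)
    {𝒰 : ∀ i, Set (Set (X i))} {δ : ℝ}
    (hleb : ∀ i, ∀ y : X i, ∃ U ∈ 𝒰 i, Metric.ball y δ ⊆ U) (s : ℝ) (N : ℕ) :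
    wLocN (T 0) a (fun i => pullCov (τ i) (𝒰 i)) f s N Z ≤
      wBowenWN (T 0) T τ a f s δ N Z := by
  refine le_iInf fun D => le_iInf fun hDc => le_iInf fun hadm => le_iInf fun hcov => ?_
  refine iInf_le_of_le D (iInf_le_of_le hDc (iInf_le_of_le ?_ (iInf_le_of_le hcov le_rfl)))
  intro p hp
  obtain ⟨hN, hM, hc0, hct, x, hsub⟩ := hadm p hp
  obtain ⟨A, hAjf, hsub'⟩ := exists_jointFiber_of_leb hτe hleb p.1 x
  exact ⟨hN, hM, hc0, hct, A, hAjf, Set.Subset.trans hsub hsub'⟩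

/-- monotonicity in the radius. -/
lemma wBowenWN_anti {ε ε' : ℝ} (h : ε ≤ ε') (s : ℝ) (N : ℕ) :
    wBowenWN (T 0) T τ a f s ε' N Z ≤ wBowenWN (T 0) T τ a f s ε N Z := by
  refine le_iInf fun D => le_iInf fun hDc => le_iInf fun hadm => le_iInf fun hcov => ?_
  refine iInf_le_of_le D (iInf_le_of_le hDc (iInf_le_of_le ?_ (iInf_le_of_le hcov le_rfl)))
  intro p hp
  obtain ⟨hN, hM, hc0, hct, x, hsub⟩ := hadm p hp
  exact ⟨hN, hM, hc0, hct, x, Set.Subset.trans hsub (wBowen_mono T τ a h _ _)⟩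

lemma lamBowenN_anti {ε ε' : ℝ} (h : ε ≤ ε') (s : ℝ) (N : ℕ) :
    lamBowenN (T 0) T τ a f s ε' N Z ≤ lamBowenN (T 0) T τ a f s ε N Z := by
  refine le_iInf fun D => le_iInf fun hDc => le_iInf fun hadm => le_iInf fun hcov => ?_
  refine iInf_le_of_le D (iInf_le_of_le hDc (iInf_le_of_le ?_ (iInf_le_of_le hcov le_rfl)))
  intro p hp
  obtain ⟨hN, hM, x, hsub⟩ := hadm p hp
  exact ⟨hN, hM, x, Set.Subset.trans hsub (wBowen_mono T τ a h _ _)⟩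

/-- the weighted quantity is below the unweighted one. -/
lemma wBowenWN_le_lamBowenN (s ε : ℝ) (N : ℕ) :
    wBowenWN (T 0) T τ a f s ε N Z ≤ lamBowenN (T 0) T τ a f s ε N Z := by
  classical
  refine le_iInf fun D => le_iInf fun hDc => le_iInf fun hadm => le_iInf fun hcov => ?_
  set g : ℕ × Set (X 0) → ℕ × Set (X 0) × ℝ≥0∞ := fun p => (p.1, p.2, 1) with hg
  have hginj : Function.Injective g := by
    intro p q hpq
    simp only [hg, Prod.mk.injEq] at hpq
    exact Prod.ext hpq.1 hpq.2.1
  refine iInf_le_of_le (g '' D) (iInf_le_of_le (hDc.image g) (iInf_le_of_le ?_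
    (iInf_le_of_le ?_ (le_of_eq ?_))))
  · rintro q ⟨p, hp, rfl⟩
    obtain ⟨hN, hM, x, hsub⟩ := hadm p hp
    exact ⟨hN, hM, zero_lt_one, one_ne_top, x, hsub⟩
  · intro z hz
    obtain ⟨p, hp, hzp⟩ : ∃ p ∈ D, z ∈ p.2 := by
      simpa using hcov hz
    refine le_trans ?_ (ENNReal.le_tsum (⟨g p, ⟨p, hp, rfl⟩⟩ : ↥(g '' D)))
    simp [hg, Set.indicator_of_mem hzp]
  · rw [show (∑' (p : ↥(g '' D)), (p : ℕ × Set (X 0) × ℝ≥0∞).2.2 *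
        pterm (T 0) f (a 0) s (p : ℕ × Set (X 0) × ℝ≥0∞).1 (p : ℕ × Set (X 0) × ℝ≥0∞).2.1)
        = ∑' (p : ↥D), (g (p : ℕ × Set (X 0))).2.2 *
            pterm (T 0) f (a 0) s (g (p : ℕ × Set (X 0))).1 (g (p : ℕ × Set (X 0))).2.1 from
      tsum_image (fun q => q.2.2 * pterm (T 0) f (a 0) s q.1 q.2.1) hginj.injOn]
    simp [hg]

end Chunk5
section Chunk6
open Metric ENNReal

variable {k : ℕ} [NeZero k] {X : Fin k → Type} [∀ i, MetricSpace (X i)]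
  [MeasurableSpace (X 0)]
  {T : ∀ i, X i → X i} {τ : ∀ i, X 0 → X i} {a : Fin k → ℝ}
  {f : X 0 → ℝ} {Z : Set (X 0)}

lemma sInf_image_univ_bot : sInf (Real.toEReal '' Set.univ) = ⊥ := by
  rw [sInf_eq_bot]
  intro b hb
  induction b with
  | bot => exact absurd hb (lt_irrefl _)
  | coe r => exact ⟨((r - 1 : ℝ) : EReal), ⟨r - 1, Set.mem_univ _, rfl⟩,
      by rw [EReal.coe_lt_coe_iff]; linarith⟩
  | top => exact ⟨((0 : ℝ) : EReal), ⟨0, Set.mem_univ _, rfl⟩, by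
      exact lt_of_lt_of_le (EReal.coe_lt_coe_iff.2 zero_lt_one) le_top⟩

lemma crit_bot_of_zero {g : ℝ → ℝ≥0∞} (h : ∀ s, g s = 0) : crit g = ⊥ := by
  unfold crit
  rw [show {s : ℝ | g s = 0} = Set.univ from Set.eq_univ_of_forall h]
  exact sInf_image_univ_bot

lemma wBowenWN_of_empty (s ε : ℝ) (N : ℕ) :
    wBowenWN (T 0) T τ a f s ε N (∅ : Set (X 0)) = 0 := by
  refine le_antisymm ?_ (zero_le)
  refine iInf_le_of_le ∅ (iInf_le_of_le Set.countable_empty (iInf_le_of_le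
    (fun p hp => absurd hp (Set.notMem_empty p)) (iInf_le_of_le
    (fun z hz => absurd hz (Set.notMem_empty z)) (le_of_eq tsum_empty))))

lemma wLocN_of_empty (𝒱 : Fin k → Set (Set (X 0))) (s : ℝ) (N : ℕ) :
    wLocN (T 0) a 𝒱 f s N (∅ : Set (X 0)) = 0 := by
  refine le_antisymm ?_ (zero_le)
  refine iInf_le_of_le ∅ (iInf_le_of_le Set.countable_empty (iInf_le_of_le
    (fun p hp => absurd hp (Set.notMem_empty p)) (iInf_le_of_le
    (fun z hz => absurd hz (Set.notMem_empty z)) (le_of_eq tsum_empty))))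

lemma lamBowenN_of_empty (s ε : ℝ) (N : ℕ) :
    lamBowenN (T 0) T τ a f s ε N (∅ : Set (X 0)) = 0 := by
  refine le_antisymm ?_ (zero_le)
  refine iInf_le_of_le ∅ (iInf_le_of_le Set.countable_empty (iInf_le_of_le
    (fun p hp => absurd hp (Set.notMem_empty p)) (iInf_le_of_le
    (Set.empty_subset _) (le_of_eq tsum_empty))))

lemma PWBowen_of_empty : PWBowen (T 0) T τ a (∅ : Set (X 0)) f = ⊥ := by
  unfold PWBowen
  rw [iSup_eq_bot]
  intro e
  exact crit_bot_of_zero fun s => by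
    unfold wBowenW; rw [ENNReal.iSup_eq_zero]; exact fun N => wBowenWN_of_empty s e.1 N

lemma PWLoc_of_empty (𝒱 : Fin k → Set (Set (X 0))) :
    PWLoc (T 0) a 𝒱 (∅ : Set (X 0)) f = ⊥ :=
  crit_bot_of_zero fun s => by
    unfold wLoc; rw [ENNReal.iSup_eq_zero]; exact fun N => wLocN_of_empty 𝒱 s N

lemma PBowen_of_empty : PBowen (T 0) T τ a (∅ : Set (X 0)) f = ⊥ := by
  unfold PBowen
  rw [iSup_eq_bot]
  intro e
  exact crit_bot_of_zero fun s => by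
    unfold lamBowen; rw [ENNReal.iSup_eq_zero]; exact fun N => lamBowenN_of_empty s e.1 N

/-- `PWLoc ≤ PWBowen` for any tuple of open covers. -/
lemma PWLoc_le_PWBowen [∀ i, CompactSpace (X i)] (hτe : ∀ i, τ i ∘ T 0 = T i ∘ τ i)
    {𝒰 : ∀ i, Set (Set (X i))} (h𝒰 : ∀ i, IsOpenCover (𝒰 i)) :
    PWLoc (T 0) a (fun i => pullCov (τ i) (𝒰 i)) Z f ≤ PWBowen (T 0) T τ a Z f := by
  obtain ⟨δ, hδ0, hleb⟩ := exists_leb h𝒰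
  have h1 : PWLoc (T 0) a (fun i => pullCov (τ i) (𝒰 i)) Z f ≤
      PWBowenEps (T 0) T τ a Z f δ := by
    apply crit_mono
    intro s hs
    unfold wBowenW at hs
    unfold wLoc
    rw [ENNReal.iSup_eq_zero] at hs ⊢
    intro N
    exact le_antisymm (le_trans (wLocN_le_wBowenWN hτe hleb s N) (le_of_eq (hs N)))
      (zero_le)
  exact le_trans h1 (le_iSup (fun e : {e : ℝ // 0 < e} => PWBowenEps (T 0) T τ a Z f e.1)
    ⟨δ, hδ0⟩)

/-- `PWBowenEps ε ≤ PWLoc` when covers have diameter `< ε`. -/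
lemma PWBowenEps_le_PWLoc [∀ i, CompactSpace (X i)] (hτe : ∀ i, τ i ∘ T 0 = T i ∘ τ i)
    (hX0 : Nonempty (X 0)) {𝒰 : ∀ i, Set (Set (X i))} {ε : ℝ}
    (hdiam : ∀ i, ∀ U ∈ 𝒰 i, Metric.diam U < ε) :
    PWBowenEps (T 0) T τ a Z f ε ≤ PWLoc (T 0) a (fun i => pullCov (τ i) (𝒰 i)) Z f := by
  apply crit_mono
  intro s hs
  unfold wLoc at hs
  unfold wBowenW
  rw [ENNReal.iSup_eq_zero] at hs ⊢
  intro N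
  exact le_antisymm (le_trans (wBowenWN_le_wLocN hτe hX0 hdiam s N) (le_of_eq (hs N)))
    (zero_le)

/-- `PWBowenEps` is antitone in the radius. -/
lemma PWBowenEps_anti {ε ε' : ℝ} (h : ε ≤ ε') :
    PWBowenEps (T 0) T τ a Z f ε' ≤ PWBowenEps (T 0) T τ a Z f ε := by
  apply crit_mono
  intro s hs
  unfold wBowenW at hs ⊢
  rw [ENNReal.iSup_eq_zero] at hs ⊢
  intro N
  exact le_antisymm (le_trans (wBowenWN_anti h s N) (le_of_eq (hs N))) (zero_le)

lemma PBowenEps_anti {ε ε' : ℝ} (h : ε ≤ ε') :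
    PBowenEps (T 0) T τ a Z f ε' ≤ PBowenEps (T 0) T τ a Z f ε := by
  apply crit_mono
  intro s hs
  unfold lamBowen at hs ⊢
  rw [ENNReal.iSup_eq_zero] at hs ⊢
  intro N
  exact le_antisymm (le_trans (lamBowenN_anti h s N) (le_of_eq (hs N))) (zero_le)

/-- easy half of `P_W = P`. -/
lemma PWBowen_le_PBowen : PWBowen (T 0) T τ a Z f ≤ PBowen (T 0) T τ a Z f := by
  apply iSup_mono
  intro e
  apply crit_mono
  intro s hs
  unfold lamBowen at hs
  unfold wBowenW
  rw [ENNReal.iSup_eq_zero] at hs ⊢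
  intro N
  exact le_antisymm (le_trans (wBowenWN_le_lamBowenN s e.1 N) (le_of_eq (hs N))) (zero_le)

end Chunk6
section Chunk7a
open Metric ENNReal Filter

lemma tsum_range_le' {I β : Type*} (g : β → ℝ≥0∞) (Φ : I → β) :
    ∑' x : ↥(Set.range Φ), g x ≤ ∑' i, g (Φ i) := by
  classical
  have hsec : ∀ x : ↥(Set.range Φ), ∃ i, Φ i = (x : β) := fun x => x.2
  choose ψ hψ using hsec
  have hinj : Function.Injective ψ := by
    intro x y hxy
    apply Subtype.ext
    rw [← hψ x, ← hψ y, hxy]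
  exact Summable.tsum_le_tsum_of_inj ψ hinj (fun c _ => zero_le)
    (fun x => le_of_eq (by rw [hψ])) ENNReal.summable ENNReal.summable

lemma birk_abs_le {Y : Type*} (T0 : Y → Y) (f : Y → ℝ) {M : ℝ}
    (hM : ∀ x, |f x| ≤ M) (n' : ℕ) (y : Y) : |birk T0 f n' y| ≤ (n' : ℝ) * M := by
  unfold birk
  calc |∑ l ∈ Finset.range n', f (T0^[l] y)| ≤ ∑ l ∈ Finset.range n', |f (T0^[l] y)| :=
        Finset.abs_sum_le_sum_abs _ _
    _ ≤ ∑ _l ∈ Finset.range n', M := Finset.sum_le_sum (fun l _ => hM _)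
    _ = (n' : ℝ) * M := by simp [mul_comm]

lemma tendsto_linexp (A B β : ℝ) (hβ : 0 < β) :
    Tendsto (fun n : ℕ => (A * n + B) * Real.exp (-(β * n))) atTop (nhds 0) := by
  have h1 : Tendsto (fun x : ℝ => x * Real.exp (-(β * x))) atTop (nhds 0) := by
    have h := tendsto_rpow_mul_exp_neg_mul_atTop_nhds_zero 1 β hβ
    exact h.congr fun x => by rw [Real.rpow_one, neg_mul]
  have h2 : Tendsto (fun x : ℝ => Real.exp (-(β * x))) atTop (nhds 0) := by
    apply Real.tendsto_exp_atBot.comp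
    apply tendsto_neg_atTop_atBot.comp
    exact tendsto_id.const_mul_atTop hβ
  have hn : Tendsto (fun n : ℕ => (n : ℝ)) atTop atTop := tendsto_natCast_atTop_atTop
  have hA := (h1.comp hn).const_mul A
  have hB := (h2.comp hn).const_mul B
  have hAB := hA.add hB
  simp only [mul_zero, add_zero] at hAB
  exact hAB.congr fun n => by simp [Function.comp]; ring

lemma tendsto_cube_exp (A1 B1 A2 B2 A3 B3 K β : ℝ) (hβ : 0 < β) :
    Tendsto (fun n : ℕ => (A1 * n + B1) * (A2 * n + B2) * (A3 * n + B3) * K *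
      Real.exp (-(β * n))) atTop (nhds 0) := by
  have h3 : 0 < β / 3 := by linarith
  have t1 := tendsto_linexp A1 B1 (β/3) h3
  have t2 := tendsto_linexp A2 B2 (β/3) h3
  have t3 := tendsto_linexp A3 B3 (β/3) h3
  have tt := ((t1.mul t2).mul t3).const_mul K
  simp only [mul_zero, zero_mul] at tt
  refine tt.congr fun n => ?_
  have he : Real.exp (-(β/3 * n)) * Real.exp (-(β/3 * n)) * Real.exp (-(β/3 * n))
      = Real.exp (-(β * n)) := by
    rw [← Real.exp_add, ← Real.exp_add]; ring_nf
  calc K * ((A1 * n + B1) * Real.exp (-(β/3 * n)) * ((A2 * n + B2) * Real.exp (-(β/3 * n)))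
        * ((A3 * n + B3) * Real.exp (-(β/3 * n))))
      = (A1 * n + B1) * (A2 * n + B2) * (A3 * n + B3) * K *
        (Real.exp (-(β/3 * n)) * Real.exp (-(β/3 * n)) * Real.exp (-(β/3 * n))) := by ring
    _ = (A1 * n + B1) * (A2 * n + B2) * (A3 * n + B3) * K * Real.exp (-(β * n)) := by
        rw [he]

lemma sum_range_tail_le (N' : ℕ) (K : ℕ) :
    ∑ n ∈ Finset.range K, (if N' ≤ n then 1 / (((n : ℝ) + 1) * ((n : ℝ) + 2)) else 0)
      ≤ 1 / ((N' : ℝ) + 1) := by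
  have key : ∀ K : ℕ, ∑ n ∈ Finset.range K,
      (if N' ≤ n then 1 / (((n : ℝ) + 1) * ((n : ℝ) + 2)) else 0)
      ≤ 1 / ((N' : ℝ) + 1) - (if N' ≤ K then 1 / ((K : ℝ) + 1) else 1 / ((N' : ℝ) + 1)) := by
    intro K
    induction K with
    | zero =>
        simp only [Finset.range_zero, Finset.sum_empty]
        by_cases h : N' ≤ 0
        · simp only [h, if_pos]
          have : N' = 0 := Nat.le_zero.1 h
          simp [this]
        · simp [h]
    | succ K ih =>
        rw [Finset.sum_range_succ]
        by_cases h : N' ≤ K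
        · rw [if_pos h]
          have hK1 : N' ≤ K + 1 := h.trans (Nat.le_succ K)
          rw [if_pos h] at ih
          have hsplit : 1 / (((K : ℝ) + 1) * ((K : ℝ) + 2))
              = 1 / ((K : ℝ) + 1) - 1 / ((K : ℝ) + 2) := by
            have h1 : ((K : ℝ) + 1) ≠ 0 := by positivity
            have h2 : ((K : ℝ) + 2) ≠ 0 := by positivity
            field_simp
            ring
          rw [if_pos hK1]
          push_cast
          rw [hsplit]
          push_cast at ih
          have hcast : ((K : ℝ) + 1 + 1) = (K : ℝ) + 2 := by ring
          rw [hcast]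
          linarith
        · rw [if_neg h]
          rw [if_neg h] at ih
          by_cases h1 : N' ≤ K + 1
          · have hN : N' = K + 1 := le_antisymm h1 (Nat.lt_of_not_le h)
            rw [if_pos h1, hN]
            have hzero : ∑ x ∈ Finset.range K,
                (if K + 1 ≤ x then 1 / (((x : ℝ) + 1) * ((x : ℝ) + 2)) else 0) = 0 :=
              Finset.sum_eq_zero fun x hx => if_neg (by
                have := Finset.mem_range.1 hx; omega)
            rw [hzero]
            push_cast
            linarith
          · rw [if_neg h1]
            linarith [ih]
  calc ∑ n ∈ Finset.range K, (if N' ≤ n then 1 / (((n : ℝ) + 1) * ((n : ℝ) + 2)) else 0)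
      ≤ 1 / ((N' : ℝ) + 1) - (if N' ≤ K then 1 / ((K : ℝ) + 1) else 1 / ((N' : ℝ) + 1)) :=
        key K
    _ ≤ 1 / ((N' : ℝ) + 1) := by
        by_cases h : N' ≤ K
        · rw [if_pos h]
          have : 0 < ((K : ℝ) + 1) := by positivity
          have : 0 ≤ 1 / ((K : ℝ) + 1) := by positivity
          linarith
        · rw [if_neg h]
          have : 0 < ((N' : ℝ) + 1) := by positivity
          have : 0 ≤ 1 / ((N' : ℝ) + 1) := by positivity
          linarith

end Chunk7a
section Chunk7b
open Metric ENNReal Filter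

variable {k : ℕ} [NeZero k] {X : Fin k → Type} [∀ i, MetricSpace (X i)]
  [∀ i, CompactSpace (X i)] [MeasurableSpace (X 0)] [BorelSpace (X 0)]
  {T : ∀ i, X i → X i} {τ : ∀ i, X 0 → X i} {a : Fin k → ℝ}
  {f : X 0 → ℝ} {Z : Set (X 0)}

set_option maxHeartbeats 2000000 in
lemma lam_zero_of_w_zero (hT : ∀ i, Continuous (T i)) (hτc : ∀ i, Continuous (τ i))
    (hτ0 : τ 0 = id) (hf : Continuous f) (ha1 : 0 < a 0)
    {ε δ s : ℝ} (hε : 0 < ε) (hδ : osc f (4 * ε) < δ)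
    (hW : wBowenW (T 0) T τ a f s ε Z = 0) :
    lamBowen (T 0) T τ a f (s + δ) (3 * ε) Z = 0 := by
  classical
  rcases Set.eq_empty_or_nonempty Z with rfl | hZne
  · unfold lamBowen
    rw [ENNReal.iSup_eq_zero]
    exact fun N => lamBowenN_of_empty _ _ _
  obtain ⟨M, hM0, hM⟩ := exists_bound hf
  set w4 : ℝ := osc f (4 * ε) with hw4
  have hw40 : 0 ≤ w4 := osc_nonneg _
  set β : ℝ := δ - w4 with hβdef
  have hβ : 0 < β := by simp only [hβdef]; linarith
  set K0 : ℝ := Real.exp ((1 + w4) / a 0) with hK0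
  have hK00 : 0 < K0 := Real.exp_pos _
  set Bnd : ℕ → ℕ := fun n => ⌈M * (a 0 * n + 1)⌉₊ + 1 with hBnd
  set tval : ℕ → ℝ := fun n => 1 / (((n : ℝ) + 1) * ((n : ℝ) + 2) * (2 * (Bnd n : ℝ) + 3))
    with htval
  have htpos : ∀ n, 0 < tval n := by
    intro n; simp only [htval]; positivity
  -- the "essentially polynomial times decaying exponential" factor
  set bigC : ℕ → ℝ := fun n =>
    ((n : ℝ) + 1) * ((n : ℝ) + 2) * (2 * (Bnd n : ℝ) + 3) * K0 * Real.exp (-(β * n))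
    with hbigC
  have hBnd_le : ∀ n : ℕ, (Bnd n : ℝ) ≤ M * (a 0 * n + 1) + 2 := by
    intro n
    simp only [hBnd]
    push_cast
    have h1 : (⌈M * (a 0 * n + 1)⌉₊ : ℝ) < M * (a 0 * n + 1) + 1 :=
      Nat.ceil_lt_add_one (by positivity)
    linarith
  have hbigC_tendsto : Tendsto bigC atTop (nhds 0) := by
    apply squeeze_zero (g := fun n : ℕ =>
      (1 * n + 1) * (1 * n + 2) * ((2 * M * a 0) * n + (2 * M + 7)) * K0 *
        Real.exp (-(β * n)))
    · intro n; simp only [hbigC]; positivity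
    · intro n
      simp only [hbigC]
      have h2 : 2 * (Bnd n : ℝ) + 3 ≤ (2 * M * a 0) * n + (2 * M + 7) := by
        have := hBnd_le n; nlinarith
      have hnn : (0:ℝ) ≤ ((n : ℝ) + 1) * ((n : ℝ) + 2) := by positivity
      have hKe : (0:ℝ) ≤ K0 * Real.exp (-(β * n)) := by positivity
      calc ((n : ℝ) + 1) * ((n : ℝ) + 2) * (2 * (Bnd n : ℝ) + 3) * K0 * Real.exp (-(β * n))
          = (((n : ℝ) + 1) * ((n : ℝ) + 2) * (2 * (Bnd n : ℝ) + 3)) *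
            (K0 * Real.exp (-(β * n))) := by ring
        _ ≤ (((n : ℝ) + 1) * ((n : ℝ) + 2) * ((2 * M * a 0) * n + (2 * M + 7))) *
            (K0 * Real.exp (-(β * n))) := by
              apply mul_le_mul_of_nonneg_right _ hKe
              apply mul_le_mul_of_nonneg_left h2 hnn
        _ = (1 * n + 1) * (1 * n + 2) * ((2 * M * a 0) * n + (2 * M + 7)) * K0 *
            Real.exp (-(β * n)) := by ring
    · exact tendsto_cube_exp 1 1 1 2 (2 * M * a 0) (2 * M + 7) K0 β hβ
  unfold lamBowen
  rw [ENNReal.iSup_eq_zero]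
  intro N
  refine le_antisymm ?_ (zero_le)
  have main : ∀ γ : NNReal, 0 < γ →
      lamBowenN (T 0) T τ a f (s + δ) (3 * ε) N Z ≤ (γ : ℝ≥0∞) := by
    intro γ hγ
    obtain ⟨N₀, hN₀⟩ : ∃ N₀ : ℕ, ∀ n ≥ N₀, bigC n ≤ (γ : ℝ) := by
      have hev : ∀ᶠ n in atTop, bigC n < (γ : ℝ) :=
        hbigC_tendsto.eventually_lt_const (by exact_mod_cast hγ)
      obtain ⟨N₀, hN₀⟩ := eventually_atTop.1 hev
      exact ⟨N₀, fun n hn => (hN₀ n hn).le⟩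
    set N' : ℕ := max (max N N₀) 1 with hN'def
    have hN'N : N ≤ N' := le_trans (le_max_left N N₀) (le_max_left _ 1)
    have hN'N₀ : N₀ ≤ N' := le_trans (le_max_right N N₀) (le_max_left _ 1)
    have hN'1 : 1 ≤ N' := le_max_right _ 1
    have hWN : wBowenWN (T 0) T τ a f s ε N' Z = 0 := by
      have h := hW
      unfold wBowenW at h
      rw [ENNReal.iSup_eq_zero] at h
      exact h N'
    obtain ⟨D, hDc, hadm, hcovW, hDsum⟩ : ∃ D : Set (ℕ × Set (X 0) × ℝ≥0∞), D.Countable ∧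
        (∀ p ∈ D, N' ≤ p.1 ∧ MeasurableSet p.2.1 ∧ 0 < p.2.2 ∧ p.2.2 ≠ ⊤ ∧
          ∃ x, p.2.1 ⊆ wBowen T τ a p.1 x ε) ∧
        (∀ z ∈ Z, 1 ≤ ∑' p : D, (p.1.2.1).indicator (fun _ => p.1.2.2) z) ∧
        ∑' p : D, p.1.2.2 * pterm (T 0) f (a 0) s p.1.1 p.1.2.1 < 1 := by
      by_contra hcon
      push_neg at hcon
      have h1 : (1 : ℝ≥0∞) ≤ wBowenWN (T 0) T τ a f s ε N' Z :=
        le_iInf fun D => le_iInf fun hc => le_iInf fun ha' => le_iInf fun hcv =>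
          hcon D hc ha' hcv
      rw [hWN] at h1
      simp at h1
    have hPne : Nonempty ↥D := by
      obtain ⟨z0, hz0⟩ := hZne
      by_contra hemp
      haveI := not_nonempty_iff.1 hemp
      have h1 := hcovW z0 hz0
      rw [tsum_empty] at h1
      simp at h1
    set nOf : ↥D → ℕ := fun p => p.1.1 with hnOf
    set AOf : ↥D → Set (X 0) := fun p => p.1.2.1 with hAOf
    set cOf : ↥D → ℝ≥0∞ := fun p => p.1.2.2 with hcOf
    set uOf : ↥D → ℝ≥0∞ := fun p => pterm (T 0) f (a 0) s (nOf p) (AOf p) with huOf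
    set vOf : ↥D → ℝ := fun p => sSup (birk (T 0) f ⌈a 0 * (nOf p : ℝ)⌉₊ '' AOf p) with hvOf
    set qOf : ↥D → ℕ × ℤ := fun p => (nOf p, ⌊vOf p⌋) with hqOf
    have hcent : ∀ p : ↥D, ∃ x, AOf p ⊆ wBowen T τ a (nOf p) x ε :=
      fun p => (hadm p.1 p.2).2.2.2.2
    choose xc hxc using hcent
    set ind : ↥D → X 0 → ℝ≥0∞ := fun p z => (AOf p).indicator (fun _ => cOf p) z with hind
    set mass : ℕ × ℤ → X 0 → ℝ≥0∞ :=
      fun nm z => ∑' p : ↥D, if qOf p = nm then ind p z else 0 with hmass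
    have hmass_total : ∀ z, ∑' nm : ℕ × ℤ, mass nm z = ∑' p : ↥D, ind p z := by
      intro z
      simp only [hmass]
      rw [ENNReal.tsum_comm]
      apply tsum_congr
      intro p
      rw [tsum_eq_single (qOf p) (fun nm hnm => if_neg fun h => hnm h.symm), if_pos rfl]
    set Zc : ℕ × ℤ → Set (X 0) :=
      fun nm => {z | z ∈ Z ∧ ENNReal.ofReal (tval nm.1) < mass nm z} with hZc
    have keyP : ∀ (nm : ℕ × ℤ) (z : X 0), mass nm z ≠ 0 →
        ∃ p : ↥D, qOf p = nm ∧ z ∈ AOf p := by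
      intro nm z hne
      by_contra hcon2
      push_neg at hcon2
      apply hne
      simp only [hmass]
      rw [ENNReal.tsum_eq_zero]
      intro p
      by_cases hq : qOf p = nm
      · rw [if_pos hq]
        simp only [hind]
        exact Set.indicator_of_notMem (hcon2 p hq) _
      · exact if_neg hq
    have hwinP : ∀ (nm : ℕ × ℤ) (z : X 0), (∃ p : ↥D, qOf p = nm ∧ z ∈ AOf p) →
        N' ≤ nm.1 ∧ -(Bnd nm.1 : ℤ) ≤ nm.2 ∧ nm.2 ≤ (Bnd nm.1 : ℤ) := by
      rintro nm z ⟨p, hqp, hzA⟩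
      subst hqp
      have hN'p : N' ≤ nOf p := (hadm p.1 p.2).1
      have hAne : (AOf p).Nonempty := ⟨z, hzA⟩
      set n' : ℕ := ⌈a 0 * (nOf p : ℝ)⌉₊ with hn'def
      have hbd : ∀ b ∈ birk (T 0) f n' '' AOf p, b ≤ (n' : ℝ) * M := by
        rintro b ⟨y, -, rfl⟩
        exact (abs_le.1 (birk_abs_le (T 0) f hM n' y)).2
      have hub : vOf p ≤ (n' : ℝ) * M := csSup_le (hAne.image _) hbd
      have hlb : -((n' : ℝ) * M) ≤ vOf p := by
        have hmem : birk (T 0) f n' z ∈ birk (T 0) f n' '' AOf p := ⟨z, hzA, rfl⟩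
        have h1 : -((n' : ℝ) * M) ≤ birk (T 0) f n' z :=
          (abs_le.1 (birk_abs_le (T 0) f hM n' z)).1
        exact le_trans h1 (le_csSup ⟨(n' : ℝ) * M, hbd⟩ hmem)
      have hn' : (n' : ℝ) ≤ a 0 * (nOf p : ℝ) + 1 :=
        le_of_lt (Nat.ceil_lt_add_one (by positivity))
      have hn'0 : (0 : ℝ) ≤ (n' : ℝ) := Nat.cast_nonneg _
      have hBd : (n' : ℝ) * M + 1 ≤ (Bnd (nOf p) : ℝ) := by
        simp only [hBnd]
        push_cast
        have hceil := Nat.le_ceil (M * (a 0 * (nOf p : ℝ) + 1))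
        nlinarith
      refine ⟨hN'p, ?_, ?_⟩
      · have h1 : vOf p - 1 ≤ (⌊vOf p⌋ : ℝ) := by
          have := Int.sub_one_lt_floor (vOf p)
          linarith
        have h2 : -(Bnd (nOf p) : ℝ) ≤ (⌊vOf p⌋ : ℝ) := by nlinarith
        exact_mod_cast h2
      · have h1 : (⌊vOf p⌋ : ℝ) ≤ vOf p := Int.floor_le _
        have h2 : (⌊vOf p⌋ : ℝ) ≤ (Bnd (nOf p) : ℝ) := by nlinarith
        exact_mod_cast h2
    have hdecomp : ∀ z ∈ Z, ∃ nm : ℕ × ℤ, z ∈ Zc nm := by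
      intro z hz
      by_contra hcon2
      push_neg at hcon2
      have hle : ∀ nm : ℕ × ℤ, mass nm z ≤ ENNReal.ofReal (tval nm.1) := by
        intro nm
        have h := hcon2 nm
        simp only [hZc, Set.mem_setOf_eq] at h
        push_neg at h
        exact h hz
      have h1 : (1 : ℝ≥0∞) ≤ ∑' nm : ℕ × ℤ, mass nm z := by
        rw [hmass_total z]
        exact hcovW z hz
      have h2 : ∑' nm : ℕ × ℤ, mass nm z ≤ ENNReal.ofReal (1 / ((N' : ℝ) + 1)) := by
        calc ∑' nm : ℕ × ℤ, mass nm z = ∑' n : ℕ, ∑' m : ℤ, mass (n, m) z :=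
              ENNReal.tsum_prod'
          _ ≤ ∑' n : ℕ, (if N' ≤ n then
                ENNReal.ofReal (1 / (((n : ℝ) + 1) * ((n : ℝ) + 2))) else 0) := by
              apply ENNReal.tsum_le_tsum
              intro n
              by_cases hn : N' ≤ n
              · rw [if_pos hn]
                have hstep : ∀ m : ℤ, mass (n, m) z ≤
                    (if m ∈ Finset.Icc (-(Bnd n : ℤ)) (Bnd n : ℤ) then
                      ENNReal.ofReal (tval n) else 0) := by
                  intro m
                  by_cases hm : m ∈ Finset.Icc (-(Bnd n : ℤ)) (Bnd n : ℤ)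
                  · rw [if_pos hm]
                    exact hle (n, m)
                  · rw [if_neg hm]
                    by_contra hne2
                    push_neg at hne2
                    have hmz : mass (n, m) z ≠ 0 := by
                      intro h0
                      rw [h0] at hne2
                      exact absurd hne2 (by simp)
                    obtain hwin := hwinP (n, m) z (keyP (n, m) z hmz)
                    exact hm (Finset.mem_Icc.2 ⟨hwin.2.1, hwin.2.2⟩)
                calc ∑' m : ℤ, mass (n, m) z
                    ≤ ∑' m : ℤ, (if m ∈ Finset.Icc (-(Bnd n : ℤ)) (Bnd n : ℤ) then
                        ENNReal.ofReal (tval n) else 0) := ENNReal.tsum_le_tsum hstep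
                  _ = ∑ m ∈ Finset.Icc (-(Bnd n : ℤ)) (Bnd n : ℤ), ENNReal.ofReal (tval n) := by
                      rw [tsum_eq_sum (s := Finset.Icc (-(Bnd n : ℤ)) (Bnd n : ℤ))
                        (fun m hm => if_neg hm)]
                      exact Finset.sum_congr rfl fun m hm => if_pos hm
                  _ = ((Finset.Icc (-(Bnd n : ℤ)) (Bnd n : ℤ)).card : ℝ≥0∞) *
                        ENNReal.ofReal (tval n) := by
                      rw [Finset.sum_const, nsmul_eq_mul]
                  _ ≤ ENNReal.ofReal (1 / (((n : ℝ) + 1) * ((n : ℝ) + 2))) := by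
                      have hcard : (Finset.Icc (-(Bnd n : ℤ)) (Bnd n : ℤ)).card
                          = 2 * Bnd n + 1 := by
                        rw [Int.card_Icc]
                        omega
                      rw [hcard]
                      rw [show ((2 * Bnd n + 1 : ℕ) : ℝ≥0∞)
                          = ENNReal.ofReal ((2 * Bnd n + 1 : ℕ) : ℝ) by
                        rw [ENNReal.ofReal_natCast]]
                      rw [← ENNReal.ofReal_mul (by positivity)]
                      apply ENNReal.ofReal_le_ofReal
                      simp only [htval]
                      rw [mul_one_div, div_le_div_iff₀ (by positivity) (by positivity)]
                      push_cast
                      have hX : (0:ℝ) < ((n : ℝ) + 1) * ((n : ℝ) + 2) := by positivity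
                      have hB0 : (0:ℝ) ≤ (Bnd n : ℝ) := Nat.cast_nonneg _
                      nlinarith [hX, hB0]
              · rw [if_neg hn]
                have hallz : ∀ m : ℤ, mass (n, m) z = 0 := by
                  intro m
                  by_contra hne2
                  exact hn (hwinP (n, m) z (keyP (n, m) z hne2)).1
                simp [hallz]
          _ ≤ ENNReal.ofReal (1 / ((N' : ℝ) + 1)) := by
              apply ENNReal.tsum_le_of_sum_range_le
              intro K
              have heq : ∀ n : ℕ, (if N' ≤ n then
                  ENNReal.ofReal (1 / (((n : ℝ) + 1) * ((n : ℝ) + 2))) else 0)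
                  = ENNReal.ofReal (if N' ≤ n then
                      1 / (((n : ℝ) + 1) * ((n : ℝ) + 2)) else 0) := by
                intro n
                by_cases hn : N' ≤ n <;> simp [hn]
              simp only [heq]
              rw [← ENNReal.ofReal_sum_of_nonneg (fun n _ => by positivity)]
              exact ENNReal.ofReal_le_ofReal (sum_range_tail_le N' K)
      have hlt : ENNReal.ofReal (1 / ((N' : ℝ) + 1)) < 1 := by
        rw [ENNReal.ofReal_lt_one]
        have hc : (1 : ℝ) ≤ (N' : ℝ) := by exact_mod_cast hN'1
        rw [div_lt_one (by linarith)]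
        linarith
      exact absurd (lt_of_le_of_lt (le_trans h1 h2) hlt) (lt_irrefl _)
    -- class representative choice
    have hpz0 : ∀ (nm : ℕ × ℤ) (z : X 0), ∃ p : ↥D, z ∈ Zc nm → (qOf p = nm ∧ z ∈ AOf p) := by
      intro nm z
      by_cases hz : z ∈ Zc nm
      · have hmne : mass nm z ≠ 0 := by
          intro h0
          have h2 := hz.2
          rw [h0] at h2
          exact absurd h2 (by simp)
        obtain ⟨p, hp1, hp2⟩ := keyP nm z hmne
        exact ⟨p, fun _ => ⟨hp1, hp2⟩⟩
      · exact ⟨Classical.arbitrary ↥D, fun h => absurd h hz⟩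
    choose pz hpz using hpz0
    set bigB : ℕ × ℤ → X 0 → Set (X 0) :=
      fun nm z => wBowen T τ a nm.1 (xc (pz nm z)) (3 * ε) with hbigB
    have hself : ∀ nm : ℕ × ℤ, ∀ z ∈ Zc nm, z ∈ bigB nm z := by
      intro nm z hz
      obtain ⟨hq, hA⟩ := hpz nm z hz
      have h1 : z ∈ wBowen T τ a (nOf (pz nm z)) (xc (pz nm z)) ε := hxc _ hA
      have h2 : nOf (pz nm z) = nm.1 := by simpa only [hqOf] using congrArg Prod.fst hq
      rw [h2] at h1
      exact wBowen_mono T τ a (by linarith) nm.1 (xc (pz nm z)) h1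
    have hgreedy : ∀ nm : ℕ × ℤ, ∃ S, S ⊆ Zc nm ∧
        (∀ z ∈ Zc nm, ∃ u ∈ S, z ∈ bigB nm u) ∧
        ∀ u ∈ S, ∀ v ∈ S, u ≠ v → (u ∉ bigB nm v ∨ v ∉ bigB nm u) :=
      fun nm => exists_greedy (Zc nm) (bigB nm) (hself nm)
    choose Sel hSel1 hSel2 hSel3 using hgreedy
    have huniq : ∀ (p : ↥D) (nm : ℕ × ℤ), qOf p = nm →
        ∀ u ∈ Sel nm, ∀ v ∈ Sel nm, u ∈ AOf p → v ∈ AOf p → u = v := by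
      intro p nm hqp u hu v hv huA hvA
      by_contra hne
      have hq1 : nOf p = nm.1 := by simpa only [hqOf] using congrArg Prod.fst hqp
      have hu1 : u ∈ wBowen T τ a nm.1 (xc p) ε := by rw [← hq1]; exact hxc p huA
      have hv1 : v ∈ wBowen T τ a nm.1 (xc p) ε := by rw [← hq1]; exact hxc p hvA
      have hvZ : v ∈ Zc nm := hSel1 nm hv
      have huZ : u ∈ Zc nm := hSel1 nm hu
      obtain ⟨hqv, hvA2⟩ := hpz nm v hvZ
      obtain ⟨hqu, huA2⟩ := hpz nm u huZ
      have hnv : nOf (pz nm v) = nm.1 := by simpa only [hqOf] using congrArg Prod.fst hqv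
      have hnu : nOf (pz nm u) = nm.1 := by simpa only [hqOf] using congrArg Prod.fst hqu
      have hv3 : v ∈ wBowen T τ a nm.1 (xc (pz nm v)) ε := by rw [← hnv]; exact hxc _ hvA2
      have hu3 : u ∈ wBowen T τ a nm.1 (xc (pz nm u)) ε := by rw [← hnu]; exact hxc _ huA2
      have hdistuv : ∀ (i : Fin k) (j : ℕ), j < ⌈cw a i * (nm.1 : ℝ)⌉₊ →
          dist ((T i)^[j] (τ i v)) ((T i)^[j] (τ i u)) < 2 * ε := by
        intro i j hj
        have e1 := hu1 i j hj
        have e2 := hv1 i j hj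
        calc dist ((T i)^[j] (τ i v)) ((T i)^[j] (τ i u))
            ≤ dist ((T i)^[j] (τ i v)) ((T i)^[j] (τ i (xc p)))
              + dist ((T i)^[j] (τ i (xc p))) ((T i)^[j] (τ i u)) := dist_triangle _ _ _
          _ < ε + ε := by
              rw [dist_comm ((T i)^[j] (τ i v))]
              exact add_lt_add e2 e1
          _ = 2 * ε := by ring
      rcases hSel3 nm u hu v hv hne with hcase | hcase
      · apply hcase
        intro i j hj
        calc dist ((T i)^[j] (τ i (xc (pz nm v)))) ((T i)^[j] (τ i u))
            ≤ dist ((T i)^[j] (τ i (xc (pz nm v)))) ((T i)^[j] (τ i v))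
              + dist ((T i)^[j] (τ i v)) ((T i)^[j] (τ i u)) := dist_triangle _ _ _
          _ < ε + 2 * ε := add_lt_add (hv3 i j hj) (hdistuv i j hj)
          _ = 3 * ε := by ring
      · apply hcase
        intro i j hj
        calc dist ((T i)^[j] (τ i (xc (pz nm u)))) ((T i)^[j] (τ i v))
            ≤ dist ((T i)^[j] (τ i (xc (pz nm u)))) ((T i)^[j] (τ i u))
              + dist ((T i)^[j] (τ i u)) ((T i)^[j] (τ i v)) := dist_triangle _ _ _
          _ < ε + 2 * ε := by
              refine add_lt_add (hu3 i j hj) ?_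
              rw [dist_comm]
              exact hdistuv i j hj
          _ = 3 * ε := by ring
    set Cc : ℕ × ℤ → ℝ≥0∞ := fun nm => ∑' p : ↥D, if qOf p = nm then cOf p else 0 with hCc
    set CW : ℕ × ℤ → ℝ≥0∞ :=
      fun nm => ∑' p : ↥D, if qOf p = nm then cOf p * uOf p else 0 with hCW
    have hcount : ∀ (nm : ℕ × ℤ) (F : Finset (X 0)), ↑F ⊆ Sel nm →
        (F.card : ℝ≥0∞) * ENNReal.ofReal (tval nm.1) ≤ Cc nm := by
      intro nm F hF
      have h1 : ∀ u ∈ F, ENNReal.ofReal (tval nm.1) ≤ mass nm u := by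
        intro u hu
        exact ((hSel1 nm (hF hu)).2).le
      calc (F.card : ℝ≥0∞) * ENNReal.ofReal (tval nm.1)
          = ∑ _u ∈ F, ENNReal.ofReal (tval nm.1) := by rw [Finset.sum_const, nsmul_eq_mul]
        _ ≤ ∑ u ∈ F, mass nm u := Finset.sum_le_sum h1
        _ = ∑' p : ↥D, ∑ u ∈ F, (if qOf p = nm then ind p u else 0) := by
            simp only [hmass]
            exact (Summable.tsum_finsetSum (fun u _ => ENNReal.summable)).symm
        _ ≤ Cc nm := by
            simp only [hCc]
            apply ENNReal.tsum_le_tsum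
            intro p
            by_cases hq : qOf p = nm
            · simp only [if_pos hq]
              by_cases hex : ∃ u0 ∈ F, u0 ∈ AOf p
              · obtain ⟨u0, hu0F, hu0A⟩ := hex
                calc ∑ u ∈ F, ind p u ≤ ∑ u ∈ F, (if u = u0 then cOf p else 0) := by
                      apply Finset.sum_le_sum
                      intro u hu
                      simp only [hind]
                      by_cases huA : u ∈ AOf p
                      · rw [Set.indicator_of_mem huA]
                        rw [if_pos (huniq p nm hq u (hF hu) u0 (hF hu0F) huA hu0A)]
                      · rw [Set.indicator_of_notMem huA]
                        exact zero_le
                  _ = cOf p := by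
                      rw [Finset.sum_ite_eq' F u0 (fun _ => cOf p), if_pos hu0F]
              · push_neg at hex
                rw [Finset.sum_eq_zero (fun u hu =>
                  Set.indicator_of_notMem (hex u hu) _)]
                exact zero_le
            · simp only [if_neg hq, Finset.sum_const_zero, le_refl]
    have hCcCW : ∀ nm : ℕ × ℤ, Cc nm ≤
        ENNReal.ofReal (Real.exp (s * nm.1 - (nm.2 : ℝ) / a 0)) * CW nm := by
      intro nm
      simp only [hCc, hCW]
      rw [← ENNReal.tsum_mul_left]
      apply ENNReal.tsum_le_tsum
      intro p
      by_cases hq : qOf p = nm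
      · rw [if_pos hq, if_pos hq]
        have hv_ge : (nm.2 : ℝ) ≤ vOf p := by
          have hsnd : ⌊vOf p⌋ = nm.2 := by
            simpa only [hqOf] using congrArg Prod.snd hq
          rw [← hsnd]
          exact Int.floor_le _
        have hn1 : (nm.1 : ℝ) = (nOf p : ℝ) := by
          have hfst : nOf p = nm.1 := by simpa only [hqOf] using congrArg Prod.fst hq
          rw [hfst]
        have hE : (1 : ℝ≥0∞) ≤ ENNReal.ofReal (Real.exp (s * nm.1 - (nm.2 : ℝ) / a 0))
            * uOf p := by
          simp only [huOf, pterm]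
          rw [← ENNReal.ofReal_mul (le_of_lt (Real.exp_pos _)), ← Real.exp_add,
            ENNReal.one_le_ofReal]
          apply Real.one_le_exp
          rw [hn1]
          have hvv : (1 / a 0) * sSup (birk (T 0) f ⌈a 0 * (nOf p : ℝ)⌉₊ '' AOf p)
              = (1 / a 0) * vOf p := by rw [hvOf]
          rw [hvv]
          have h0 : 0 ≤ (vOf p - (nm.2 : ℝ)) / a 0 := div_nonneg (by linarith) ha1.le
          have heq : s * (nOf p : ℝ) - (nm.2 : ℝ) / a 0 +
              (-(s * (nOf p : ℝ)) + (1 / a 0) * vOf p) = (vOf p - (nm.2 : ℝ)) / a 0 := by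
            field_simp
            ring
          linarith
        calc cOf p = cOf p * 1 := (mul_one _).symm
          _ ≤ cOf p * (ENNReal.ofReal (Real.exp (s * nm.1 - (nm.2 : ℝ) / a 0)) * uOf p) :=
              mul_le_mul_right hE _
          _ = ENNReal.ofReal (Real.exp (s * nm.1 - (nm.2 : ℝ) / a 0)) * (cOf p * uOf p) := by
              ring
      · rw [if_neg hq, if_neg hq, mul_zero]
    have hCW_le : ∀ nm : ℕ × ℤ, CW nm ≤ ∑' p : ↥D, cOf p * uOf p := by
      intro nm
      apply ENNReal.tsum_le_tsum
      intro p
      by_cases hq : qOf p = nm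
      · rw [if_pos hq]
      · rw [if_neg hq]; exact zero_le
    have hWtot_lt : ∑' p : ↥D, cOf p * uOf p < 1 := hDsum
    have hCcfin : ∀ nm : ℕ × ℤ, Cc nm ≠ ⊤ := by
      intro nm
      have h := le_trans (hCcCW nm)
        (mul_le_mul_right (le_trans (hCW_le nm) hWtot_lt.le) _)
      rw [mul_one] at h
      exact ne_top_of_le_ne_top ENNReal.ofReal_ne_top h
    have hofR0 : ∀ n : ℕ, ENNReal.ofReal (tval n) ≠ 0 := by
      intro n
      rw [Ne, ENNReal.ofReal_eq_zero, not_le]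
      exact htpos n
    have hSelfin : ∀ nm : ℕ × ℤ, (Sel nm).Finite := by
      intro nm
      by_contra hinf
      have hinf : (Sel nm).Infinite := hinf
      obtain ⟨K, hK⟩ := ENNReal.exists_nat_gt
        ((ENNReal.div_lt_top (hCcfin nm) (hofR0 nm.1)).ne)
      obtain ⟨F, hFsub, hFcard⟩ := hinf.exists_subset_card_eq K
      have hc := hcount nm F hFsub
      rw [hFcard] at hc
      have hlt2 : Cc nm < (K : ℝ≥0∞) * ENNReal.ofReal (tval nm.1) := by
        rw [← ENNReal.div_lt_iff (Or.inl (hofR0 nm.1)) (Or.inl ENNReal.ofReal_ne_top)]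
        exact hK
      exact absurd hc (not_le.2 hlt2)
    have hFn0 : ∀ nm : ℕ × ℤ, ∃ F : Finset (X 0), ↑F = Sel nm :=
      fun nm => ⟨(hSelfin nm).toFinset, (hSelfin nm).coe_toFinset⟩
    choose Fn hFn using hFn0
    have hZcne : ∀ nm : ℕ × ℤ, ∀ z ∈ Zc nm, mass nm z ≠ 0 := by
      intro nm z hz h0
      have h2 := hz.2
      rw [h0] at h2
      exact absurd h2 (by simp)
    have hZcN' : ∀ nm : ℕ × ℤ, ∀ z ∈ Zc nm, N' ≤ nm.1 :=
      fun nm z hz => (hwinP nm z (keyP nm z (hZcne nm z hz))).1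
    -- per selected point bound on the pressure term
    have hterm : ∀ (nm : ℕ × ℤ), ∀ u ∈ Sel nm,
        pterm (T 0) f (a 0) (s + δ) nm.1 (bigB nm u) ≤
        ENNReal.ofReal (Real.exp (-((s + δ) * nm.1) +
          (1 / a 0) * (((nm.2 : ℝ) + 1) + (⌈a 0 * (nm.1 : ℝ)⌉₊ : ℝ) * w4))) := by
      intro nm u hu
      have huZ : u ∈ Zc nm := hSel1 nm hu
      obtain ⟨hqu, huA⟩ := hpz nm u huZ
      have hnu : nOf (pz nm u) = nm.1 := by simpa only [hqOf] using congrArg Prod.fst hqu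
      have hu3 : u ∈ wBowen T τ a nm.1 (xc (pz nm u)) ε := by
        rw [← hnu]; exact hxc _ huA
      have hsup : sSup (birk (T 0) f ⌈a 0 * (nm.1 : ℝ)⌉₊ '' bigB nm u) ≤
          ((nm.2 : ℝ) + 1) + (⌈a 0 * (nm.1 : ℝ)⌉₊ : ℝ) * w4 := by
        apply csSup_le (Set.Nonempty.image _ ⟨u, hself nm u huZ⟩)
        rintro b ⟨y, hy, rfl⟩
        have hco : ∀ l < ⌈a 0 * (nm.1 : ℝ)⌉₊,
            dist ((T 0)^[l] u) ((T 0)^[l] y) ≤ 4 * ε := by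
          intro l hl
          have d1 := wBowen_coord0 T τ a hτ0 hu3 l hl
          have d2 := wBowen_coord0 T τ a hτ0 (show y ∈ wBowen T τ a nm.1
            (xc (pz nm u)) (3 * ε) from hy) l hl
          calc dist ((T 0)^[l] u) ((T 0)^[l] y)
              ≤ dist ((T 0)^[l] u) ((T 0)^[l] (xc (pz nm u)))
                + dist ((T 0)^[l] (xc (pz nm u))) ((T 0)^[l] y) := dist_triangle _ _ _
            _ ≤ 4 * ε := by
                rw [dist_comm ((T 0)^[l] u)]
                linarith
        have hosc := birk_osc hf (T 0) hco
        have habs := abs_le.1 hosc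
        have hbu : birk (T 0) f ⌈a 0 * (nm.1 : ℝ)⌉₊ u ≤ vOf (pz nm u) := by
          simp only [hvOf]
          rw [hnu]
          apply le_csSup
          · refine ⟨(⌈a 0 * (nm.1 : ℝ)⌉₊ : ℝ) * M, ?_⟩
            rintro b ⟨y', -, rfl⟩
            exact (abs_le.1 (birk_abs_le (T 0) f hM _ y')).2
          · exact ⟨u, huA, rfl⟩
        have hvlt : vOf (pz nm u) < (nm.2 : ℝ) + 1 := by
          have hfl := Int.lt_floor_add_one (vOf (pz nm u))
          have hm : (⌊vOf (pz nm u)⌋ : ℝ) = (nm.2 : ℝ) := by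
            rw [show ⌊vOf (pz nm u)⌋ = nm.2 from by simpa only [hqOf] using congrArg Prod.snd hqu]
          rw [hm] at hfl
          exact hfl
        -- b = birk y ≤ birk u + ⌈⌉*w4 < (m+1) + ⌈⌉*w4
        have hw : birk (T 0) f ⌈a 0 * (nm.1 : ℝ)⌉₊ y ≤
            birk (T 0) f ⌈a 0 * (nm.1 : ℝ)⌉₊ u + (⌈a 0 * (nm.1 : ℝ)⌉₊ : ℝ) * w4 := by
          linarith [habs.1]
        linarith
      simp only [pterm]
      apply ENNReal.ofReal_le_ofReal
      apply Real.exp_le_exp.2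
      have h1a : (0:ℝ) ≤ 1 / a 0 := by positivity
      have := mul_le_mul_of_nonneg_left hsup h1a
      linarith
    -- per-class sum bound
    have hclass : ∀ nm : ℕ × ℤ,
        ∑ u ∈ Fn nm, pterm (T 0) f (a 0) (s + δ) nm.1 (bigB nm u) ≤
        ENNReal.ofReal (γ : ℝ) * CW nm := by
      intro nm
      rcases Finset.eq_empty_or_nonempty (Fn nm) with he | hne
      · rw [he]
        simp
      · obtain ⟨u0, hu0⟩ := hne
        have hu0S : u0 ∈ Sel nm := by
          rw [← hFn nm]
          exact Finset.mem_coe.2 hu0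
        have hNnm : N' ≤ nm.1 := hZcN' nm u0 (hSel1 nm hu0S)
        have hfactor : ENNReal.ofReal (Real.exp (s * nm.1 - (nm.2 : ℝ) / a 0)) *
            (ENNReal.ofReal (tval nm.1))⁻¹ *
            ENNReal.ofReal (Real.exp (-((s + δ) * nm.1) +
              (1 / a 0) * (((nm.2 : ℝ) + 1) + (⌈a 0 * (nm.1 : ℝ)⌉₊ : ℝ) * w4)))
            ≤ ENNReal.ofReal (γ : ℝ) := by
          rw [← ENNReal.ofReal_inv_of_pos (htpos nm.1)]
          rw [← ENNReal.ofReal_mul (le_of_lt (Real.exp_pos _)),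
            ← ENNReal.ofReal_mul (by positivity)]
          apply ENNReal.ofReal_le_ofReal
          have hn'' : (⌈a 0 * (nm.1 : ℝ)⌉₊ : ℝ) ≤ a 0 * nm.1 + 1 :=
            le_of_lt (Nat.ceil_lt_add_one (by positivity))
          have h5 : (1 / a 0) * ((⌈a 0 * (nm.1 : ℝ)⌉₊ : ℝ) * w4) ≤
              (nm.1 : ℝ) * w4 + (1 / a 0) * w4 := by
            have hle1 : (1 / a 0) * ((⌈a 0 * (nm.1 : ℝ)⌉₊ : ℝ) * w4) ≤
                (1 / a 0) * ((a 0 * nm.1 + 1) * w4) :=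
              mul_le_mul_of_nonneg_left
                (mul_le_mul_of_nonneg_right hn'' hw40) (by positivity)
            have heq2 : (1 / a 0) * ((a 0 * (nm.1 : ℝ) + 1) * w4) =
                (nm.1 : ℝ) * w4 + (1 / a 0) * w4 := by
              field_simp
            linarith
          have hprod : Real.exp (s * nm.1 - (nm.2 : ℝ) / a 0) *
              Real.exp (-((s + δ) * nm.1) +
                (1 / a 0) * (((nm.2 : ℝ) + 1) + (⌈a 0 * (nm.1 : ℝ)⌉₊ : ℝ) * w4)) ≤
              K0 * Real.exp (-(β * nm.1)) := by
            rw [← Real.exp_add, hK0, ← Real.exp_add]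
            apply Real.exp_le_exp.2
            have hma : (nm.2 : ℝ) / a 0 = (1 / a 0) * (nm.2 : ℝ) := by ring
            have hgoal : s * (nm.1:ℝ) - (nm.2 : ℝ) / a 0 + (-((s + δ) * nm.1) +
                (1 / a 0) * (((nm.2 : ℝ) + 1) + (⌈a 0 * (nm.1 : ℝ)⌉₊ : ℝ) * w4)) =
                -(δ * nm.1) + (1 / a 0) + (1 / a 0) * ((⌈a 0 * (nm.1 : ℝ)⌉₊ : ℝ) * w4) := by
              field_simp
              ring
            rw [hgoal, hβdef]
            have hexp2 : (1 + w4) / a 0 = (1 / a 0) + (1 / a 0) * w4 := by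
              field_simp
            rw [hexp2]
            nlinarith [h5]
          calc Real.exp (s * nm.1 - (nm.2 : ℝ) / a 0) * (tval nm.1)⁻¹ *
              Real.exp (-((s + δ) * nm.1) +
                (1 / a 0) * (((nm.2 : ℝ) + 1) + (⌈a 0 * (nm.1 : ℝ)⌉₊ : ℝ) * w4))
              = (tval nm.1)⁻¹ * (Real.exp (s * nm.1 - (nm.2 : ℝ) / a 0) *
                Real.exp (-((s + δ) * nm.1) +
                  (1 / a 0) * (((nm.2 : ℝ) + 1) + (⌈a 0 * (nm.1 : ℝ)⌉₊ : ℝ) * w4))) := by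
                ring
            _ ≤ (tval nm.1)⁻¹ * (K0 * Real.exp (-(β * nm.1))) := by
                apply mul_le_mul_of_nonneg_left hprod
                rw [inv_nonneg]
                exact (htpos nm.1).le
            _ = bigC nm.1 := by
                simp only [hbigC, htval]
                rw [one_div, inv_inv]
                ring
            _ ≤ (γ : ℝ) := hN₀ nm.1 (le_trans hN'N₀ hNnm)
        calc ∑ u ∈ Fn nm, pterm (T 0) f (a 0) (s + δ) nm.1 (bigB nm u)
            ≤ ∑ _u ∈ Fn nm, ENNReal.ofReal (Real.exp (-((s + δ) * nm.1) +
              (1 / a 0) * (((nm.2 : ℝ) + 1) + (⌈a 0 * (nm.1 : ℝ)⌉₊ : ℝ) * w4))) := by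
              apply Finset.sum_le_sum
              intro u hu
              exact hterm nm u (by rw [← hFn nm]; exact Finset.mem_coe.2 hu)
          _ = ((Fn nm).card : ℝ≥0∞) * ENNReal.ofReal (Real.exp (-((s + δ) * nm.1) +
              (1 / a 0) * (((nm.2 : ℝ) + 1) + (⌈a 0 * (nm.1 : ℝ)⌉₊ : ℝ) * w4))) := by
              rw [Finset.sum_const, nsmul_eq_mul]
          _ = (((Fn nm).card : ℝ≥0∞) * ENNReal.ofReal (tval nm.1)) *
              ((ENNReal.ofReal (tval nm.1))⁻¹ * ENNReal.ofReal (Real.exp (-((s + δ) * nm.1) +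
              (1 / a 0) * (((nm.2 : ℝ) + 1) + (⌈a 0 * (nm.1 : ℝ)⌉₊ : ℝ) * w4)))) := by
              rw [mul_assoc, ← mul_assoc (ENNReal.ofReal (tval nm.1)),
                ENNReal.mul_inv_cancel (hofR0 nm.1) ENNReal.ofReal_ne_top, one_mul]
          _ ≤ Cc nm * ((ENNReal.ofReal (tval nm.1))⁻¹ *
              ENNReal.ofReal (Real.exp (-((s + δ) * nm.1) +
              (1 / a 0) * (((nm.2 : ℝ) + 1) + (⌈a 0 * (nm.1 : ℝ)⌉₊ : ℝ) * w4)))) :=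
              mul_le_mul_left (hcount nm (Fn nm) (by rw [hFn nm])) _
          _ ≤ (ENNReal.ofReal (Real.exp (s * nm.1 - (nm.2 : ℝ) / a 0)) * CW nm) *
              ((ENNReal.ofReal (tval nm.1))⁻¹ *
              ENNReal.ofReal (Real.exp (-((s + δ) * nm.1) +
              (1 / a 0) * (((nm.2 : ℝ) + 1) + (⌈a 0 * (nm.1 : ℝ)⌉₊ : ℝ) * w4)))) :=
              mul_le_mul_left (hCcCW nm) _
          _ = (ENNReal.ofReal (Real.exp (s * nm.1 - (nm.2 : ℝ) / a 0)) *
              (ENNReal.ofReal (tval nm.1))⁻¹ *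
              ENNReal.ofReal (Real.exp (-((s + δ) * nm.1) +
              (1 / a 0) * (((nm.2 : ℝ) + 1) + (⌈a 0 * (nm.1 : ℝ)⌉₊ : ℝ) * w4)))) * CW nm := by
              ring
          _ ≤ ENNReal.ofReal (γ : ℝ) * CW nm := mul_le_mul_left hfactor _
    have hCWtot : ∑' nm : ℕ × ℤ, CW nm = ∑' p : ↥D, cOf p * uOf p := by
      simp only [hCW]
      rw [ENNReal.tsum_comm]
      apply tsum_congr
      intro p
      rw [tsum_eq_single (qOf p) (fun nm hnm => if_neg fun h => hnm h.symm), if_pos rfl]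
    -- assemble the Λ-admissible family
    refine le_trans (iInf_le_of_le
      (Set.range (fun i : Σ nm : ℕ × ℤ, ↥(Fn nm) => ((i.1.1 : ℕ), bigB i.1 (i.2 : X 0))))
      (iInf_le_of_le (Set.countable_range _) (iInf_le_of_le ?_ (iInf_le_of_le ?_ le_rfl)))) ?_
    · rintro p ⟨i, rfl⟩
      have hiS : (i.2 : X 0) ∈ Sel i.1 := by rw [← hFn i.1]; exact i.2.2
      refine ⟨le_trans hN'N (hZcN' i.1 _ (hSel1 i.1 hiS)), ?_, ?_⟩
      · exact (wBowen_open T τ a hT hτc _ _ _).measurableSet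
      · exact ⟨xc (pz i.1 (i.2 : X 0)), subset_rfl⟩
    · intro z hz
      obtain ⟨nm, hnm⟩ := hdecomp z hz
      obtain ⟨u, hu, hzu⟩ := hSel2 nm z hnm
      have huF : u ∈ Fn nm := by
        have h := hu
        rw [← hFn nm] at h
        exact Finset.mem_coe.1 h
      exact Set.mem_biUnion (Set.mem_range_self (⟨nm, ⟨u, huF⟩⟩ : Σ nm : ℕ × ℤ, ↥(Fn nm))) hzu
    · calc ∑' p : ↥(Set.range (fun i : Σ nm : ℕ × ℤ, ↥(Fn nm) =>
            ((i.1.1 : ℕ), bigB i.1 (i.2 : X 0)))),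
            pterm (T 0) f (a 0) (s + δ) (p : ℕ × Set (X 0)).1 (p : ℕ × Set (X 0)).2
          ≤ ∑' i : Σ nm : ℕ × ℤ, ↥(Fn nm),
            pterm (T 0) f (a 0) (s + δ) i.1.1 (bigB i.1 (i.2 : X 0)) :=
            tsum_range_le' (fun p : ℕ × Set (X 0) => pterm (T 0) f (a 0) (s + δ) p.1 p.2) _
        _ = ∑' nm : ℕ × ℤ, ∑' u : ↥(Fn nm),
            pterm (T 0) f (a 0) (s + δ) nm.1 (bigB nm (u : X 0)) :=
            ENNReal.tsum_sigma' (fun i : Σ nm : ℕ × ℤ, ↥(Fn nm) =>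
              pterm (T 0) f (a 0) (s + δ) i.1.1 (bigB i.1 (i.2 : X 0)))
        _ = ∑' nm : ℕ × ℤ, ∑ u ∈ Fn nm, pterm (T 0) f (a 0) (s + δ) nm.1 (bigB nm u) := by
            apply tsum_congr
            intro nm
            exact Finset.tsum_subtype (Fn nm)
              (fun u => pterm (T 0) f (a 0) (s + δ) nm.1 (bigB nm u))
        _ ≤ ∑' nm : ℕ × ℤ, ENNReal.ofReal (γ : ℝ) * CW nm := ENNReal.tsum_le_tsum hclass
        _ = ENNReal.ofReal (γ : ℝ) * ∑' nm : ℕ × ℤ, CW nm := ENNReal.tsum_mul_left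
        _ = ENNReal.ofReal (γ : ℝ) * ∑' p : ↥D, cOf p * uOf p := by rw [hCWtot]
        _ ≤ ENNReal.ofReal (γ : ℝ) * 1 := mul_le_mul_right hWtot_lt.le _
        _ = (γ : ℝ≥0∞) := by rw [mul_one, ENNReal.ofReal_coe_nnreal]
  apply ENNReal.le_of_forall_pos_le_add
  intro γ hγ _
  simpa using main γ hγ

end Chunk7b
section Chunk8
open Metric ENNReal Filter

variable {Y : Type*} [MetricSpace Y] {f : Y → ℝ}

lemma osc_mono [CompactSpace Y] (hf : Continuous f) {ε ε' : ℝ} (h : ε ≤ ε') :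
    osc f ε ≤ osc f ε' := by
  apply Real.sSup_le _ (osc_nonneg _)
  rintro d ⟨x, y, hxy, rfl⟩
  exact osc_le hf (le_trans hxy h)

end Chunk8

section Chunk9
open Metric ENNReal Filter

variable {k : ℕ} [NeZero k] {X : Fin k → Type} [∀ i, MetricSpace (X i)]
  [∀ i, CompactSpace (X i)] [MeasurableSpace (X 0)] [BorelSpace (X 0)]
  {T : ∀ i, X i → X i} {τ : ∀ i, X 0 → X i} {a : Fin k → ℝ}
  {f : X 0 → ℝ} {Z : Set (X 0)}

lemma PBowen_le_PWBowen (hT : ∀ i, Continuous (T i)) (hτc : ∀ i, Continuous (τ i))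
    (hτ0 : τ 0 = id) (hf : Continuous f) (ha1 : 0 < a 0) :
    PBowen (T 0) T τ a Z f ≤ PWBowen (T 0) T τ a Z f := by
  rcases Set.eq_empty_or_nonempty Z with rfl | hZne
  · rw [PBowen_of_empty, PWBowen_of_empty]
  apply iSup_le
  rintro ⟨e, he⟩
  apply ereal_le_of_forall_add
  intro η hη
  obtain ⟨ε0, hε0, hosc⟩ := osc_small hf (show (0:ℝ) < η / 2 by linarith)
  set ε : ℝ := min (ε0 / 4) (e / 3) with hεdef
  have hε : 0 < ε := lt_min (by linarith) (by linarith)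
  have h4 : osc f (4 * ε) ≤ η / 2 := by
    refine le_trans (osc_mono hf ?_) hosc
    have : ε ≤ ε0 / 4 := min_le_left _ _
    linarith
  have hshift : PBowenEps (T 0) T τ a Z f (3 * ε) ≤
      PWBowenEps (T 0) T τ a Z f ε + ((osc f (4 * ε) + η / 2 : ℝ) : EReal) := by
    apply crit_le_shift
    · have := osc_nonneg (f := f) (4 * ε)
      linarith
    · intro s hs
      exact lam_zero_of_w_zero hT hτc hτ0 hf ha1 hε (by linarith [osc_nonneg (f := f) (4 * ε)]) hs
  have h3e : (3 : ℝ) * ε ≤ e := by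
    have : ε ≤ e / 3 := min_le_right _ _
    linarith
  calc PBowenEps (T 0) T τ a Z f e ≤ PBowenEps (T 0) T τ a Z f (3 * ε) :=
        PBowenEps_anti h3e
    _ ≤ PWBowenEps (T 0) T τ a Z f ε + ((osc f (4 * ε) + η / 2 : ℝ) : EReal) := hshift
    _ ≤ PWBowen (T 0) T τ a Z f + (η : EReal) := by
        apply add_le_add
        · exact le_iSup (fun e' : {e' : ℝ // 0 < e'} =>
            PWBowenEps (T 0) T τ a Z f e'.1) ⟨ε, hε⟩
        · rw [EReal.coe_le_coe_iff]
          linarith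

end Chunk9

/-- The average 𝐚-weighted topological pressure of any subset `Z` equals both
the supremum over all tuples of open covers of the local average 𝐚-weighted pressures and
the limit of the local average 𝐚-weighted pressures as the maximal diameter of the covers
tends to `0`; moreover all these quantities equal the 𝐚-weighted topological pressure. -/
theorem average_weighted_pressure_eq_sup_local
    {k : ℕ} [NeZero k]
    (X : Fin k → Type) [∀ i, MetricSpace (X i)] [∀ i, CompactSpace (X i)]
    [∀ i, MeasurableSpace (X i)] [∀ i, BorelSpace (X i)]
    (T : ∀ i, X i → X i) (hT : ∀ i, Continuous (T i))
    (τ : ∀ i, X 0 → X i) (hτ0 : τ 0 = id)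
    (hτc : ∀ i, Continuous (τ i)) (hτs : ∀ i, Function.Surjective (τ i))
    (hτe : ∀ i, τ i ∘ T 0 = T i ∘ τ i)
    (hchain : ∀ i j : Fin k, i ≤ j → ∃ p : X i → X j,
        Continuous p ∧ p ∘ T i = T j ∘ p ∧ p ∘ τ i = τ j)
    (a : Fin k → ℝ) (ha1 : 0 < a 0) (ha : ∀ i, 0 ≤ a i)
    (Z : Set (X 0)) (f : X 0 → ℝ) (hf : Continuous f) :
    (PWBowen (T 0) T τ a Z f
        = ⨆ 𝒰 : {𝒰 : ∀ i, Set (Set (X i)) // ∀ i, IsOpenCover (𝒰 i)},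
            PWLoc (T 0) a (fun i => pullCov (τ i) (𝒰.1 i)) Z f)
    ∧ (∀ 𝒰s : ℕ → ∀ i, Set (Set (X i)),
        (∀ n i, IsOpenCover (𝒰s n i)) →
        (∀ ε : ℝ, 0 < ε → ∃ N : ℕ, ∀ n ≥ N, ∀ i, ∀ U ∈ 𝒰s n i, Metric.diam U < ε) →
        Filter.Tendsto (fun n => PWLoc (T 0) a (fun i => pullCov (τ i) (𝒰s n i)) Z f)
          Filter.atTop (nhds (PWBowen (T 0) T τ a Z f)))
    ∧ PWBowen (T 0) T τ a Z f = PBowen (T 0) T τ a Z f := by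
  refine ⟨?_, ?_, ?_⟩
  · -- part 1
    rcases Set.eq_empty_or_nonempty Z with rfl | hZne
    · rw [PWBowen_of_empty]
      symm
      rw [iSup_eq_bot]
      intro 𝒰
      exact PWLoc_of_empty _
    have hX0 : Nonempty (X 0) := ⟨hZne.choose⟩
    apply le_antisymm
    · apply iSup_le
      rintro ⟨e, he⟩
      obtain ⟨𝒰, h𝒰, hdiam⟩ := exists_small_cover (X := X) he
      exact le_trans (PWBowenEps_le_PWLoc hτe hX0 hdiam)
        (le_iSup (fun 𝒰' : {𝒰' : ∀ i, Set (Set (X i)) // ∀ i, IsOpenCover (𝒰' i)} =>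
          PWLoc (T 0) a (fun i => pullCov (τ i) (𝒰'.1 i)) Z f) ⟨𝒰, h𝒰⟩)
    · apply iSup_le
      rintro ⟨𝒰, h𝒰⟩
      exact PWLoc_le_PWBowen hτe h𝒰
  · -- part 2
    intro 𝒰s h𝒰s hdiam
    rcases Set.eq_empty_or_nonempty Z with rfl | hZne
    · have h1 : ∀ n, PWLoc (T 0) a (fun i => pullCov (τ i) (𝒰s n i)) (∅ : Set (X 0)) f
          = ⊥ := fun n => PWLoc_of_empty _
      rw [PWBowen_of_empty]
      simp only [h1]
      exact tendsto_const_nhds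
    have hX0 : Nonempty (X 0) := ⟨hZne.choose⟩
    rw [tendsto_order]
    constructor
    · intro c hc
      rw [show PWBowen (T 0) T τ a Z f
          = ⨆ e : {e : ℝ // 0 < e}, PWBowenEps (T 0) T τ a Z f e.1 from rfl,
        lt_iSup_iff] at hc
      obtain ⟨⟨e, he⟩, hce⟩ := hc
      obtain ⟨Nd, hNd⟩ := hdiam e he
      rw [Filter.eventually_atTop]
      exact ⟨Nd, fun n hn =>
        lt_of_lt_of_le hce (PWBowenEps_le_PWLoc hτe hX0 (hNd n hn))⟩
    · intro c hc
      rw [Filter.eventually_atTop]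
      exact ⟨0, fun n _ => lt_of_le_of_lt (PWLoc_le_PWBowen hτe (h𝒰s n)) hc⟩
  · -- part 3
    exact le_antisymm PWBowen_le_PBowen (PBowen_le_PWBowen hT hτc hτ0 hf ha1)

end WTP
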